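/- arXiv:1705.10352 — 8 statements merged into one kernel-verified Lean document; each statement's English description precedes it below -/
import Mathlib

section
/- Let R > 0 and Λ > 0, and let Φ be a radial steady state with parameters (R, Λ). Then Φ(r) > 0 for every r ∈ [0, R). -/
/-- `Φ` is a radial steady state with parameters `(R, Λ)`: it is twice continuously
differentiable on `[0, R]`, satisfies `-Φ''(r) - Φ'(r)/r + Φ(r) = Λ exp(Φ(r))` on `(0, R)`,
and `Φ'(0) = 0`, `Φ(R) = 0`. -/
def IsRadialSteadyState (R Λ : ℝ) (Φ : ℝ → ℝ) : Prop :=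
  ContDiffOn ℝ 2 Φ (Set.Icc 0 R) ∧
  (∀ r ∈ Set.Ioo 0 R,
    -(deriv (deriv Φ) r) - deriv Φ r / r + Φ r = Λ * Real.exp (Φ r)) ∧
  deriv Φ 0 = 0 ∧ Φ R = 0

theorem positivity_of_radial_steady_state
    (R Λ : ℝ) (hR : 0 < R) (hΛ : 0 < Λ) (Φ : ℝ → ℝ)
    (hΦ : IsRadialSteadyState R Λ Φ) :
    ∀ r ∈ Set.Ico (0:ℝ) R, 0 < Φ r := by
  obtain ⟨hC2, hODE, hd0, hRbd⟩ := hΦ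
  by_contra hcon
  push_neg at hcon
  obtain ⟨r₀, hr₀, hΦr₀⟩ := hcon
  have hunique : UniqueDiffOn ℝ (Set.Icc 0 R) := uniqueDiffOn_Icc hR
  set g := derivWithin Φ (Set.Icc 0 R) with hgdef
  have hgC1 : ContDiffOn ℝ 1 g (Set.Icc 0 R) := hC2.derivWithin hunique (by norm_num)
  have hΦcont : ContinuousOn Φ (Set.Icc 0 R) := hC2.continuousOn
  have hgcont : ContinuousOn g (Set.Icc 0 R) := hgC1.continuousOn
  have hnhds : ∀ r ∈ Set.Ioo 0 R, Set.Icc 0 R ∈ nhds r := fun r hr =>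
    Icc_mem_nhds hr.1 hr.2
  have hder : ∀ r ∈ Set.Ioo 0 R, deriv Φ r = g r := fun r hr =>
    (derivWithin_of_mem_nhds (hnhds r hr)).symm
  have hder2 : ∀ r ∈ Set.Ioo 0 R, HasDerivAt (deriv Φ) (deriv (deriv Φ) r) r := by
    intro r hr
    have hgd : DifferentiableAt ℝ g r :=
      ((hgC1.differentiableOn one_ne_zero) r (Set.Ioo_subset_Icc_self hr)).differentiableAt
        (hnhds r hr)
    have heq : deriv Φ =ᶠ[nhds r] g := by
      filter_upwards [isOpen_Ioo.mem_nhds hr] with x hx using hder x hx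
    have : DifferentiableAt ℝ (deriv Φ) r := hgd.congr_of_eventuallyEq heq
    exact this.hasDerivAt
  set h : ℝ → ℝ := fun r => r * deriv Φ r with hhdef
  have hderiv_h : ∀ r ∈ Set.Ioo 0 R,
      HasDerivAt h (r * (Φ r - Λ * Real.exp (Φ r))) r := by
    intro r hr
    have hmul := (hasDerivAt_id r).mul (hder2 r hr)
    have hode := hODE r hr
    have hrne : r ≠ 0 := ne_of_gt hr.1
    have hval : 1 * deriv Φ r + id r * deriv (deriv Φ) r
        = r * (Φ r - Λ * Real.exp (Φ r)) := by
      have hd2 : deriv (deriv Φ) r = Φ r - Λ * Real.exp (Φ r) - deriv Φ r / r := by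
        linarith
      simp only [id]
      rw [hd2]
      field_simp
      ring
    rw [hval] at hmul
    exact hmul
  -- a minimizer of Φ on [0,R] lying in [0,R)
  have hne : (Set.Icc (0:ℝ) R).Nonempty := Set.nonempty_Icc.mpr hR.le
  obtain ⟨s₀, hs₀, hmin₀⟩ := isCompact_Icc.exists_isMinOn hne hΦcont
  have hmin₀' : ∀ y ∈ Set.Icc (0:ℝ) R, Φ s₀ ≤ Φ y := isMinOn_iff.mp hmin₀
  obtain ⟨s, hsIco, hmin⟩ : ∃ s ∈ Set.Ico (0:ℝ) R, ∀ y ∈ Set.Icc 0 R, Φ s ≤ Φ y := by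
    rcases lt_or_eq_of_le hs₀.2 with hlt | heq
    · exact ⟨s₀, ⟨hs₀.1, hlt⟩, hmin₀'⟩
    · refine ⟨r₀, hr₀, fun y hy => ?_⟩
      have h1 : Φ s₀ ≤ Φ r₀ := hmin₀' r₀ ⟨hr₀.1, hr₀.2.le⟩
      have h2 : Φ s₀ ≤ Φ y := hmin₀' y hy
      have h3 : Φ s₀ = 0 := by rw [heq, hRbd]
      linarith
  have hsIcc : s ∈ Set.Icc (0:ℝ) R := ⟨hsIco.1, hsIco.2.le⟩
  have hm0 : Φ s ≤ 0 := le_trans (hmin r₀ ⟨hr₀.1, hr₀.2.le⟩) hΦr₀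
  have hFs : Φ s - Λ * Real.exp (Φ s) < 0 := by
    have h1 : 0 < Real.exp (Φ s) := Real.exp_pos _
    nlinarith
  -- find t with s < t < R and F < 0 on [s,t]
  have hFcont : ContinuousOn (fun r => Φ r - Λ * Real.exp (Φ r)) (Set.Icc 0 R) :=
    hΦcont.sub (continuousOn_const.mul (Real.continuous_exp.comp_continuousOn hΦcont))
  have hcw : (fun r => Φ r - Λ * Real.exp (Φ r)) ⁻¹' Set.Iio 0 ∈
      nhdsWithin s (Set.Icc 0 R) :=
    (hFcont s hsIcc) (isOpen_Iio.mem_nhds hFs)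
  obtain ⟨U, hUopen, hUs, hUsub⟩ := mem_nhdsWithin.mp hcw
  obtain ⟨ε, hε, hball⟩ := Metric.isOpen_iff.mp hUopen s hUs
  set t := min (s + ε / 2) ((s + R) / 2) with htdef
  have hst : s < t := by
    apply lt_min
    · linarith
    · linarith [hsIco.2]
  have htR : t < R := lt_of_le_of_lt (min_le_right _ _) (by linarith [hsIco.2])
  have hsub : Set.Icc s t ⊆ Set.Icc 0 R := fun x hx =>
    ⟨le_trans hsIco.1 hx.1, le_trans hx.2 htR.le⟩
  have hballsub : ∀ x ∈ Set.Icc s t, x ∈ U := by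
    intro x hx
    apply hball
    rw [Metric.mem_ball, Real.dist_eq, abs_lt]
    constructor
    · linarith [hx.1]
    · have : x ≤ s + ε / 2 := le_trans hx.2 (min_le_left _ _)
      linarith
  have hFneg : ∀ x ∈ Set.Icc s t, Φ x - Λ * Real.exp (Φ x) < 0 := by
    intro x hx
    exact hUsub ⟨hballsub x hx, hsub hx⟩
  -- h s = 0
  have hhs : h s = 0 := by
    rcases eq_or_lt_of_le hsIco.1 with h0 | h0
    · simp [hhdef, ← h0]
    · have hs' : s ∈ Set.Ioo 0 R := ⟨h0, hsIco.2⟩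
      have hloc : IsLocalMin Φ s := (isMinOn_iff.mpr hmin).isLocalMin (hnhds s hs')
      have hz : deriv Φ s = 0 := hloc.deriv_eq_zero
      simp [hhdef, hz]
  -- h is continuous on [s,t]
  have hhcont : ContinuousOn h (Set.Icc s t) := by
    apply ContinuousOn.congr (continuousOn_id.mul (hgcont.mono hsub))
    intro x hx
    rcases eq_or_lt_of_le (le_trans hsIco.1 hx.1) with h0 | h0
    · simp [hhdef, ← h0]
    · have hx' : x ∈ Set.Ioo 0 R := ⟨h0, lt_of_le_of_lt hx.2 htR⟩
      simp [hhdef, hder x hx']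
  -- h is strictly decreasing on [s,t]
  have hanti : StrictAntiOn h (Set.Icc s t) := by
    apply strictAntiOn_of_deriv_neg (convex_Icc s t) hhcont
    intro x hx
    rw [interior_Icc] at hx
    have hx' : x ∈ Set.Ioo 0 R := ⟨lt_of_le_of_lt hsIco.1 hx.1, lt_trans hx.2 htR⟩
    rw [(hderiv_h x hx').deriv]
    exact mul_neg_of_pos_of_neg hx'.1 (hFneg x ⟨hx.1.le, hx.2.le⟩)
  -- hence deriv Φ < 0 on (s,t)
  have hΦ'neg : ∀ x ∈ Set.Ioo s t, deriv Φ x < 0 := by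
    intro x hx
    have hhx : h x < h s :=
      hanti (Set.left_mem_Icc.mpr hst.le) ⟨hx.1.le, hx.2.le⟩ hx.1
    rw [hhs] at hhx
    have hxpos : 0 < x := lt_of_le_of_lt hsIco.1 hx.1
    have hhx' : x * deriv Φ x < 0 := hhx
    by_contra hge
    push_neg at hge
    nlinarith
  -- so Φ is strictly decreasing on [s,t], contradicting minimality of Φ s
  have hΦanti : StrictAntiOn Φ (Set.Icc s t) := by
    apply strictAntiOn_of_deriv_neg (convex_Icc s t) (hΦcont.mono hsub)
    intro x hx
    rw [interior_Icc] at hx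
    exact hΦ'neg x hx
  have h1 : Φ t < Φ s :=
    hΦanti (Set.left_mem_Icc.mpr hst.le) (Set.right_mem_Icc.mpr hst.le) hst
  have h2 : Φ s ≤ Φ t := hmin t (hsub (Set.right_mem_Icc.mpr hst.le))
  linarith
end

section
/- Let R > 0 and Λ ≥ 0, and let Φ be a radial steady state with parameters (R, Λ). If Λ·∫₀^R exp(Φ(r))·r dr ≥ 4 and R·Φ'(R) + (1/2)·(R·Φ'(R))² + ∫₀^R Φ(r)²·r dr < 0, then R > 4. -/
theorem radius_lower_bound
    (R Λ : ℝ) (hR : 0 < R) (hΛ : 0 ≤ Λ) (Φ : ℝ → ℝ)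
    (hΦ : IsRadialSteadyState R Λ Φ)
    (h1 : 4 ≤ Λ * ∫ r in (0:ℝ)..R, Real.exp (Φ r) * r)
    (h2 : R * deriv Φ R + (1/2) * (R * deriv Φ R)^2
        + (∫ r in (0:ℝ)..R, (Φ r)^2 * r) < 0) :
    4 < R := by
  obtain ⟨hC2, hODE, hd0, hbR⟩ := hΦ
  have huIcc : Set.uIcc (0:ℝ) R = Set.Icc 0 R := Set.uIcc_of_le hR.le
  have hus : UniqueDiffOn ℝ (Set.Icc (0:ℝ) R) := uniqueDiffOn_Icc hR
  have hΦc : ContinuousOn Φ (Set.Icc (0:ℝ) R) := hC2.continuousOn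
  have hI2nonneg : 0 ≤ ∫ r in (0:ℝ)..R, (Φ r)^2 * r :=
    intervalIntegral.integral_nonneg hR.le (fun x hx => mul_nonneg (sq_nonneg _) hx.1)
  by_cases hdR : DifferentiableAt ℝ Φ R
  swap
  · exfalso
    rw [deriv_zero_of_not_differentiableAt hdR] at h2
    simp only [mul_zero, zero_pow, ne_eq, OfNat.ofNat_ne_zero, not_false_eq_true,
      zero_add, mul_zero] at h2
    nlinarith [hI2nonneg]
  -- main case
  set g : ℝ → ℝ := derivWithin Φ (Set.Icc (0:ℝ) R) with hg_def
  have hg1 : ContDiffOn ℝ 1 g (Set.Icc (0:ℝ) R) := hC2.derivWithin hus (by norm_num)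
  have hgc : ContinuousOn g (Set.Icc (0:ℝ) R) := hg1.continuousOn
  have hgd : DifferentiableOn ℝ g (Set.Icc (0:ℝ) R) := hg1.differentiableOn one_ne_zero
  have hgR : g R = deriv Φ R :=
    hdR.hasDerivAt.hasDerivWithinAt.derivWithin (hus R ⟨hR.le, le_rfl⟩)
  have key : ∀ r ∈ Set.Ioo (0:ℝ) R,
      HasDerivAt (fun x => x * g x) (r * Φ r - Λ * (Real.exp (Φ r) * r)) r := by
    intro r hr
    have hmem : Set.Icc (0:ℝ) R ∈ nhds r := Icc_mem_nhds hr.1 hr.2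
    have hEq : deriv Φ =ᶠ[nhds r] g := by
      filter_upwards [isOpen_Ioo.mem_nhds hr] with x hx
      exact (derivWithin_of_mem_nhds (Icc_mem_nhds hx.1 hx.2)).symm
    have hgx : g r = deriv Φ r := derivWithin_of_mem_nhds hmem
    have hgdiff : DifferentiableAt ℝ g r :=
      (hgd r (Set.Ioo_subset_Icc_self hr)).differentiableAt hmem
    have hF : HasDerivAt (fun x => x * g x) (1 * g r + r * deriv g r) r :=
      (hasDerivAt_id r).mul hgdiff.hasDerivAt
    have hdd : deriv (deriv Φ) r = deriv g r := Filter.EventuallyEq.deriv_eq hEq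
    have heq := hODE r hr
    rw [hdd, ← hgx] at heq
    have hrne : r ≠ 0 := ne_of_gt hr.1
    have hval : 1 * g r + r * deriv g r = r * Φ r - Λ * (Real.exp (Φ r) * r) := by
      field_simp at heq
      nlinarith [heq]
    rwa [hval] at hF
  have hcont : ContinuousOn (fun x => x * g x) (Set.Icc (0:ℝ) R) :=
    continuousOn_id.mul hgc
  have hce : ContinuousOn (fun x => Real.exp (Φ x) * x) (Set.Icc (0:ℝ) R) :=
    (Real.continuous_exp.comp_continuousOn hΦc).mul continuousOn_id
  have hint1 : IntervalIntegrable (fun x => x * Φ x) MeasureTheory.volume 0 R := by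
    apply ContinuousOn.intervalIntegrable; rw [huIcc]; exact continuousOn_id.mul hΦc
  have hint2 : IntervalIntegrable (fun x => Real.exp (Φ x) * x) MeasureTheory.volume 0 R := by
    apply ContinuousOn.intervalIntegrable; rw [huIcc]; exact hce
  have hint3 : IntervalIntegrable (fun x => (Φ x)^2 * x) MeasureTheory.volume 0 R := by
    apply ContinuousOn.intervalIntegrable; rw [huIcc]
    exact (hΦc.pow 2).mul continuousOn_id
  have hint : IntervalIntegrable (fun x => x * Φ x - Λ * (Real.exp (Φ x) * x))
      MeasureTheory.volume 0 R := hint1.sub (hint2.const_mul Λ)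
  have hFTC : ∫ x in (0:ℝ)..R, (x * Φ x - Λ * (Real.exp (Φ x) * x)) =
      R * g R - 0 * g 0 :=
    intervalIntegral.integral_eq_sub_of_hasDeriv_right_of_le hR.le hcont
      (fun x hx => (key x hx).hasDerivWithinAt) hint
  set I₁ : ℝ := ∫ x in (0:ℝ)..R, x * Φ x with hI1_def
  set I₂ : ℝ := ∫ x in (0:ℝ)..R, (Φ x)^2 * x with hI2_def
  set M : ℝ := Λ * ∫ r in (0:ℝ)..R, Real.exp (Φ r) * r with hM_def
  have hkey : R * deriv Φ R = I₁ - M := by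
    rw [intervalIntegral.integral_sub hint1 (hint2.const_mul Λ),
      intervalIntegral.integral_const_mul] at hFTC
    rw [← hgR]
    linarith [hFTC]
  -- Cauchy-Schwarz
  have hCS : 2 * I₁^2 ≤ R^2 * I₂ := by
    set t : ℝ := 2 * I₁ / R^2 with ht_def
    have hq : 0 ≤ ∫ x in (0:ℝ)..R, (Φ x - t)^2 * x :=
      intervalIntegral.integral_nonneg hR.le (fun x hx => mul_nonneg (sq_nonneg _) hx.1)
    have hexpand : ∫ x in (0:ℝ)..R, (Φ x - t)^2 * x
        = I₂ - 2*t*I₁ + t^2 * (R^2/2) := by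
      have hfun : ∀ x ∈ Set.uIcc (0:ℝ) R, (Φ x - t)^2 * x
          = ((Φ x)^2 * x - 2*t*(x * Φ x)) + t^2 * x := fun x _ => by ring
      rw [intervalIntegral.integral_congr hfun,
        intervalIntegral.integral_add (hint3.sub (hint1.const_mul (2*t)))
          ((continuous_id'.intervalIntegrable _ _).const_mul (t^2)),
        intervalIntegral.integral_sub hint3 (hint1.const_mul (2*t)),
        intervalIntegral.integral_const_mul, intervalIntegral.integral_const_mul,
        integral_id]
      ring
    rw [hexpand] at hq
    have hR2 : (0:ℝ) < R^2 := by positivity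
    have ht2 : I₂ - 2*t*I₁ + t^2 * (R^2/2) = I₂ - 2*I₁^2/R^2 := by
      rw [ht_def]; field_simp; ring
    rw [ht2] at hq
    have h' : 2*I₁^2/R^2 ≤ I₂ := by linarith
    have := (div_le_iff₀ hR2).mp h'
    linarith
  -- final arithmetic
  by_contra hcon
  push_neg at hcon
  rw [hkey] at h2
  have hM4 : 4 ≤ M := h1
  nlinarith [sq_nonneg (5*I₁ - 4*M + 4), mul_nonneg (sub_nonneg.mpr hM4) (by linarith : (0:ℝ) ≤ M + 2),
    mul_nonneg (mul_nonneg (sub_nonneg.mpr hcon) (by linarith : (0:ℝ) ≤ 4 + R)) hI2nonneg,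
    hCS, h2, hI2nonneg]
end

section
/- Let R > 0 and Λ ≥ 0, let Φ be a radial steady state with parameters (R, Λ), let n ≥ 1 be an integer and b ∈ ℝ. Suppose h₁ and h₂ are both continuously differentiable on [0, R], twice continuously differentiable on (0, R), and satisfy −h''(r) − h'(r)/r + (n²/r² + 1)·h(r) = Λ·exp(Φ(r))·h(r) for every r ∈ (0, R), with h(0) = 0 and h(R) = b. Then h₁(r) = h₂(r) for every r ∈ [0, R]. -/
open Set Filter Topology

namespace FMDU

noncomputable def DD (R : ℝ) (f : ℝ → ℝ) : ℝ → ℝ := derivWithin f (Set.Icc 0 R)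

variable {R Λ : ℝ} {Φ : ℝ → ℝ}

lemma DD_eq_deriv {f : ℝ → ℝ} {r : ℝ} (h : r ∈ Ioo 0 R) : DD R f r = deriv f r :=
  derivWithin_of_mem_nhds (Icc_mem_nhds h.1 h.2)

/-- Bundled analytic facts about a steady state. -/
structure Facts (R Λ : ℝ) (Φ : ℝ → ℝ) : Prop where
  hR : 0 < R
  contPhi : ContinuousOn Φ (Icc 0 R)
  cont1 : ContinuousOn (DD R Φ) (Icc 0 R)
  cont2 : ContinuousOn (DD R (DD R Φ)) (Icc 0 R)
  hd1 : ∀ r ∈ Ioo 0 R, HasDerivAt Φ (DD R Φ r) r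
  hd2 : ∀ r ∈ Ioo 0 R, HasDerivAt (DD R Φ) (DD R (DD R Φ) r) r
  eqn : ∀ r ∈ Ioc 0 R, DD R (DD R Φ) r = Φ r - Λ * Real.exp (Φ r) - DD R Φ r / r
  d0 : DD R Φ 0 = 0
  dd0 : DD R (DD R Φ) 0 = (Φ 0 - Λ * Real.exp (Φ 0)) / 2
  phiR : Φ R = 0
  hdw1 : ∀ r ∈ Set.Icc 0 R, HasDerivWithinAt Φ (DD R Φ r) (Set.Icc 0 R) r
  hdw2 : ∀ r ∈ Set.Icc 0 R, HasDerivWithinAt (DD R Φ) (DD R (DD R Φ) r) (Set.Icc 0 R) r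

lemma facts (hR : 0 < R) (hΦ : IsRadialSteadyState R Λ Φ) : Facts R Λ Φ := by
  obtain ⟨hreg, heqn, -, hphiR⟩ := hΦ
  have huniq : UniqueDiffOn ℝ (Icc (0:ℝ) R) := uniqueDiffOn_Icc hR
  have contPhi : ContinuousOn Φ (Icc 0 R) := hreg.continuousOn
  have hd1' : ContDiffOn ℝ 1 (DD R Φ) (Icc 0 R) :=
    hreg.derivWithin huniq (by norm_num)
  have cont1 : ContinuousOn (DD R Φ) (Icc 0 R) := hd1'.continuousOn
  have cont2 : ContinuousOn (DD R (DD R Φ)) (Icc 0 R) :=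
    hd1'.continuousOn_derivWithin huniq le_rfl
  have hd1 : ∀ r ∈ Ioo 0 R, HasDerivAt Φ (DD R Φ r) r := by
    intro r hr
    have : DifferentiableAt ℝ Φ r :=
      (hreg.differentiableOn (by norm_num)).differentiableAt (Icc_mem_nhds hr.1 hr.2)
    rw [DD_eq_deriv hr]
    exact this.hasDerivAt
  -- on Ioo, DD R Φ = deriv Φ
  have hEq : ∀ r ∈ Ioo (0:ℝ) R, DD R Φ r = deriv Φ r := fun r hr => DD_eq_deriv hr
  have hderivC1 : ContDiffOn ℝ 1 (deriv Φ) (Ioo 0 R) := by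
    have := (hreg.mono (Ioo_subset_Icc_self : Ioo (0:ℝ) R ⊆ Icc 0 R)).deriv_of_isOpen
      isOpen_Ioo (m := 1) (by norm_num)
    exact this
  have hd2 : ∀ r ∈ Ioo 0 R, HasDerivAt (DD R Φ) (DD R (DD R Φ) r) r := by
    intro r hr
    have hda : DifferentiableAt ℝ (deriv Φ) r :=
      (hderivC1.differentiableOn one_ne_zero).differentiableAt (isOpen_Ioo.mem_nhds hr)
    have hev : DD R Φ =ᶠ[𝓝 r] deriv Φ :=
      eventually_of_mem (isOpen_Ioo.mem_nhds hr) hEq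
    have h1 : HasDerivAt (DD R Φ) (deriv (deriv Φ) r) r :=
      hda.hasDerivAt.congr_of_eventuallyEq hev
    have h2 : DD R (DD R Φ) r = deriv (deriv Φ) r := by
      rw [DD_eq_deriv hr, Filter.EventuallyEq.deriv_eq hev]
    rw [h2]; exact h1
  have eqnIoo : ∀ r ∈ Ioo 0 R, DD R (DD R Φ) r
      = Φ r - Λ * Real.exp (Φ r) - DD R Φ r / r := by
    intro r hr
    have h2 : DD R (DD R Φ) r = deriv (deriv Φ) r := by
      have hev : DD R Φ =ᶠ[𝓝 r] deriv Φ :=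
        eventually_of_mem (isOpen_Ioo.mem_nhds hr) hEq
      rw [DD_eq_deriv hr, Filter.EventuallyEq.deriv_eq hev]
    have := heqn r hr
    rw [h2, DD_eq_deriv hr]
    linarith
  -- extension of the equation to r = R by continuity
  have eqnR : DD R (DD R Φ) R = Φ R - Λ * Real.exp (Φ R) - DD R Φ R / R := by
    have hne : (𝓝[Ioo (0:ℝ) R] R).NeBot := by
      refine mem_closure_iff_nhdsWithin_neBot.mp ?_
      rw [closure_Ioo (ne_of_lt hR)]
      exact ⟨le_of_lt hR, le_rfl⟩
    set g : ℝ → ℝ := fun x => DD R (DD R Φ) x - (Φ x - Λ * Real.exp (Φ x) - DD R Φ x / x)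
      with hg
    have hRIcc : R ∈ Icc (0:ℝ) R := ⟨le_of_lt hR, le_rfl⟩
    have hcg : ContinuousWithinAt g (Ioo 0 R) R := by
      have hsub : Ioo (0:ℝ) R ⊆ Icc 0 R := Ioo_subset_Icc_self
      have c2 : ContinuousWithinAt (DD R (DD R Φ)) (Ioo 0 R) R := (cont2 R hRIcc).mono hsub
      have c0 : ContinuousWithinAt Φ (Ioo 0 R) R := (contPhi R hRIcc).mono hsub
      have c1 : ContinuousWithinAt (DD R Φ) (Ioo 0 R) R := (cont1 R hRIcc).mono hsub
      have cid : ContinuousWithinAt (fun x : ℝ => x) (Ioo 0 R) R := continuousWithinAt_id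
      exact (c2.sub ((c0.sub ((continuousWithinAt_const.mul
        (Real.continuous_exp.continuousAt.comp_continuousWithinAt c0)))).sub
        (c1.div cid (ne_of_gt hR))))
    have h1 : Tendsto g (𝓝[Ioo (0:ℝ) R] R) (𝓝 (g R)) := hcg
    have h2 : Tendsto g (𝓝[Ioo (0:ℝ) R] R) (𝓝 0) := by
      refine Tendsto.congr' ?_ tendsto_const_nhds
      filter_upwards [self_mem_nhdsWithin] with x hx
      have := eqnIoo x hx
      simp only [hg]
      linarith
    have hgR : g R = 0 := tendsto_nhds_unique h1 h2
    simp only [hg] at hgR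
    linarith
  have eqn : ∀ r ∈ Ioc 0 R, DD R (DD R Φ) r
      = Φ r - Λ * Real.exp (Φ r) - DD R Φ r / r := by
    intro r hr
    rcases eq_or_lt_of_le hr.2 with hrR | hrR
    · rw [hrR]; exact eqnR
    · exact eqnIoo r ⟨hr.1, hrR⟩
  -- Neumann at 0 : DD R Φ 0 = 0
  have hne0 : (𝓝[Ioo (0:ℝ) R] 0).NeBot := by
    refine mem_closure_iff_nhdsWithin_neBot.mp ?_
    rw [closure_Ioo (ne_of_lt hR)]
    exact ⟨le_rfl, le_of_lt hR⟩
  have h0Icc : (0:ℝ) ∈ Icc (0:ℝ) R := ⟨le_rfl, le_of_lt hR⟩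
  have tphi' : Tendsto (DD R Φ) (𝓝[Ioo (0:ℝ) R] 0) (𝓝 (DD R Φ 0)) :=
    (cont1 0 h0Icc).mono Ioo_subset_Icc_self
  have tphi : Tendsto Φ (𝓝[Ioo (0:ℝ) R] 0) (𝓝 (Φ 0)) :=
    (contPhi 0 h0Icc).mono Ioo_subset_Icc_self
  have tphi'' : Tendsto (DD R (DD R Φ)) (𝓝[Ioo (0:ℝ) R] 0) (𝓝 (DD R (DD R Φ) 0)) :=
    (cont2 0 h0Icc).mono Ioo_subset_Icc_self
  have tid : Tendsto (fun x : ℝ => x) (𝓝[Ioo (0:ℝ) R] 0) (𝓝 0) :=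
    tendsto_nhdsWithin_of_tendsto_nhds tendsto_id
  have hform : ∀ x ∈ Ioo (0:ℝ) R,
      DD R Φ x = x * (Φ x - Λ * Real.exp (Φ x) - DD R (DD R Φ) x) := by
    intro x hx
    have hx0 : (x:ℝ) ≠ 0 := ne_of_gt hx.1
    rw [eqnIoo x hx]
    field_simp
    ring
  have d0 : DD R Φ 0 = 0 := by
    have t2 : Tendsto (DD R Φ) (𝓝[Ioo (0:ℝ) R] 0) (𝓝 0) := by
      have : Tendsto (fun x => x * (Φ x - Λ * Real.exp (Φ x) - DD R (DD R Φ) x))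
          (𝓝[Ioo (0:ℝ) R] 0) (𝓝 (0 * (Φ 0 - Λ * Real.exp (Φ 0) - DD R (DD R Φ) 0))) :=
        tid.mul ((tphi.sub ((tendsto_const_nhds.mul
          ((Real.continuous_exp.tendsto _).comp tphi)))).sub tphi'')
      rw [zero_mul] at this
      exact Tendsto.congr' (by filter_upwards [self_mem_nhdsWithin] with x hx
        using (hform x hx).symm) this
    exact tendsto_nhds_unique tphi' t2
  -- second derivative at 0
  have dd0 : DD R (DD R Φ) 0 = (Φ 0 - Λ * Real.exp (Φ 0)) / 2 := by
    -- slope of DD R Φ at 0 tends to DD R (DD R Φ) 0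
    have hdw : HasDerivWithinAt (DD R Φ) (DD R (DD R Φ) 0) (Icc 0 R) 0 := by
      have hdiff : DifferentiableOn ℝ (DD R Φ) (Icc 0 R) := hd1'.differentiableOn one_ne_zero
      have := (hdiff 0 h0Icc).hasDerivWithinAt
      rwa [show derivWithin (DD R Φ) (Icc 0 R) 0 = DD R (DD R Φ) 0 from rfl] at this
      -- note DD R (DD R Φ) 0 is defeq to derivWithin
    have hslope : Tendsto (fun x => DD R Φ x / x) (𝓝[Ioo (0:ℝ) R] 0)
        (𝓝 (DD R (DD R Φ) 0)) := by
      have := (hasDerivWithinAt_iff_tendsto_slope.mp hdw)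
      have hmono : 𝓝[Ioo (0:ℝ) R] (0:ℝ) ≤ 𝓝[Icc 0 R \ {0}] 0 := by
        apply nhdsWithin_mono
        intro x hx
        exact ⟨Ioo_subset_Icc_self hx, by simp [ne_of_gt hx.1]⟩
      have := this.mono_left hmono
      refine this.congr' ?_
      filter_upwards [self_mem_nhdsWithin] with x hx
      simp [slope, d0, sub_zero]
      rw [div_eq_inv_mul]
    have hslope2 : Tendsto (fun x => DD R Φ x / x) (𝓝[Ioo (0:ℝ) R] 0)
        (𝓝 (Φ 0 - Λ * Real.exp (Φ 0) - DD R (DD R Φ) 0)) := by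
      have t : Tendsto (fun x => Φ x - Λ * Real.exp (Φ x) - DD R (DD R Φ) x)
          (𝓝[Ioo (0:ℝ) R] 0) (𝓝 (Φ 0 - Λ * Real.exp (Φ 0) - DD R (DD R Φ) 0)) :=
        (tphi.sub ((tendsto_const_nhds.mul
          ((Real.continuous_exp.tendsto _).comp tphi)))).sub tphi''
      refine t.congr' ?_
      filter_upwards [self_mem_nhdsWithin] with x hx
      have hx0 : (x:ℝ) ≠ 0 := ne_of_gt hx.1
      rw [hform x hx, mul_div_cancel_left₀ _ hx0]
    have := tendsto_nhds_unique hslope hslope2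
    linarith
  have hdw1 : ∀ r ∈ Icc (0:ℝ) R, HasDerivWithinAt Φ (DD R Φ r) (Icc 0 R) r := by
    intro r hr
    exact ((hreg.differentiableOn (by norm_num)) r hr).hasDerivWithinAt
  have hdw2 : ∀ r ∈ Icc (0:ℝ) R, HasDerivWithinAt (DD R Φ) (DD R (DD R Φ) r) (Icc 0 R) r := by
    intro r hr
    exact ((hd1'.differentiableOn one_ne_zero) r hr).hasDerivWithinAt
  exact ⟨hR, contPhi, cont1, cont2, hd1, hd2, eqn, d0, dd0, hphiR, hdw1, hdw2⟩

end FMDU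


namespace FMDU
open Set Filter Topology

variable {R Λ : ℝ} {Φ : ℝ → ℝ}

/-- Right window: critical point with negative second derivative gives a smaller value
to the right. -/
lemma window_right (hF : Facts R Λ Φ) {x₀ : ℝ} (hx : x₀ ∈ Ico 0 R)
    (h1 : DD R Φ x₀ = 0) (h2 : DD R (DD R Φ) x₀ < 0) :
    ∃ y ∈ Icc 0 R, Φ y < Φ x₀ := by
  have hxIcc : x₀ ∈ Icc (0:ℝ) R := ⟨hx.1, le_of_lt hx.2⟩
  -- find δ > 0 with Φ'' < 0 on Icc x₀ (x₀+δ)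
  have hev : ∀ᶠ x in 𝓝[Icc (0:ℝ) R] x₀, DD R (DD R Φ) x < 0 :=
    (hF.cont2 x₀ hxIcc).eventually_lt continuousWithinAt_const h2
  obtain ⟨ε, hε, hball⟩ := Metric.mem_nhdsWithin_iff.mp hev
  set δ := min (ε/2) (R - x₀) with hδdef
  have hδ : 0 < δ := lt_min (by linarith) (by linarith [hx.2])
  have hsub : Icc x₀ (x₀ + δ) ⊆ Icc 0 R := by
    intro x hxx
    constructor
    · linarith [hxx.1, hx.1]
    · have : δ ≤ R - x₀ := min_le_right _ _
      linarith [hxx.2]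
  have hneg : ∀ x ∈ Icc x₀ (x₀ + δ), DD R (DD R Φ) x < 0 := by
    intro x hxx
    refine hball ⟨?_, hsub hxx⟩
    have : δ ≤ ε/2 := min_le_left _ _
    simp only [Metric.mem_ball, Real.dist_eq, abs_lt]
    constructor <;> linarith [hxx.1, hxx.2, hε]
  -- Φ' strictly decreasing on [x₀, x₀+δ]
  have hanti : StrictAntiOn (DD R Φ) (Icc x₀ (x₀ + δ)) := by
    refine strictAntiOn_of_deriv_neg (convex_Icc _ _) ((hF.cont1).mono hsub) ?_
    intro x hxx
    rw [interior_Icc] at hxx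
    have hxIoo : x ∈ Ioo 0 R := by
      constructor
      · linarith [hxx.1, hx.1]
      · have : δ ≤ R - x₀ := min_le_right _ _
        have := hxx.2; simp only [hδdef] at this ⊢
        linarith
    rw [(hF.hd2 x hxIoo).deriv]
    exact hneg x ⟨le_of_lt hxx.1, le_of_lt hxx.2⟩
  have hphineg : ∀ x ∈ Ioo x₀ (x₀ + δ), DD R Φ x < 0 := by
    intro x hxx
    have := hanti (left_mem_Icc.mpr (by linarith)) ⟨le_of_lt hxx.1, le_of_lt hxx.2⟩ hxx.1
    rwa [h1] at this
  have hantiPhi : StrictAntiOn Φ (Icc x₀ (x₀ + δ)) := by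
    refine strictAntiOn_of_deriv_neg (convex_Icc _ _) ((hF.contPhi).mono hsub) ?_
    intro x hxx
    rw [interior_Icc] at hxx
    have hxIoo : x ∈ Ioo 0 R := by
      constructor
      · linarith [hxx.1, hx.1]
      · have : δ ≤ R - x₀ := min_le_right _ _
        linarith [hxx.2]
    rw [(hF.hd1 x hxIoo).deriv]
    exact hphineg x hxx
  refine ⟨x₀ + δ, hsub (right_mem_Icc.mpr (by linarith)), ?_⟩
  exact hantiPhi (left_mem_Icc.mpr (by linarith)) (right_mem_Icc.mpr (by linarith)) (by linarith)

/-- Left window: critical point with negative second derivative gives a positivity window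
for `Φ'` on the left, and a smaller value on the left. -/
lemma window_left (hF : Facts R Λ Φ) {x₀ : ℝ} (hx : x₀ ∈ Ioc 0 R)
    (h1 : DD R Φ x₀ = 0) (h2 : DD R (DD R Φ) x₀ < 0) :
    ∃ δ > 0, 0 ≤ x₀ - δ ∧ (∀ x ∈ Ico (x₀ - δ) x₀, 0 < DD R Φ x) ∧ Φ (x₀ - δ) < Φ x₀ := by
  have hxIcc : x₀ ∈ Icc (0:ℝ) R := ⟨le_of_lt hx.1, hx.2⟩
  have hev : ∀ᶠ x in 𝓝[Icc (0:ℝ) R] x₀, DD R (DD R Φ) x < 0 :=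
    (hF.cont2 x₀ hxIcc).eventually_lt continuousWithinAt_const h2
  obtain ⟨ε, hε, hball⟩ := Metric.mem_nhdsWithin_iff.mp hev
  set δ := min (ε/2) x₀ with hδdef
  have hδ : 0 < δ := lt_min (by linarith) hx.1
  have hδx : δ ≤ x₀ := min_le_right _ _
  have hsub : Icc (x₀ - δ) x₀ ⊆ Icc 0 R := by
    intro x hxx
    exact ⟨by linarith [hxx.1], le_trans hxx.2 hx.2⟩
  have hneg : ∀ x ∈ Icc (x₀ - δ) x₀, DD R (DD R Φ) x < 0 := by
    intro x hxx
    refine hball ⟨?_, hsub hxx⟩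
    have : δ ≤ ε/2 := min_le_left _ _
    simp only [Metric.mem_ball, Real.dist_eq, abs_lt]
    constructor <;> linarith [hxx.1, hxx.2, hε]
  have hanti : StrictAntiOn (DD R Φ) (Icc (x₀ - δ) x₀) := by
    refine strictAntiOn_of_deriv_neg (convex_Icc _ _) ((hF.cont1).mono hsub) ?_
    intro x hxx
    rw [interior_Icc] at hxx
    have hxIoo : x ∈ Ioo 0 R := ⟨by linarith [hxx.1], lt_of_lt_of_le hxx.2 hx.2⟩
    rw [(hF.hd2 x hxIoo).deriv]
    exact hneg x ⟨le_of_lt hxx.1, le_of_lt hxx.2⟩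
  have hpos : ∀ x ∈ Ico (x₀ - δ) x₀, 0 < DD R Φ x := by
    intro x hxx
    have := hanti ⟨hxx.1, le_of_lt hxx.2⟩ (right_mem_Icc.mpr (by linarith)) hxx.2
    rwa [h1] at this
  refine ⟨δ, hδ, by linarith, hpos, ?_⟩
  have hmono : StrictMonoOn Φ (Icc (x₀ - δ) x₀) := by
    refine strictMonoOn_of_deriv_pos (convex_Icc _ _) ((hF.contPhi).mono hsub) ?_
    intro x hxx
    rw [interior_Icc] at hxx
    have hxIoo : x ∈ Ioo 0 R := ⟨by linarith [hxx.1], lt_of_lt_of_le hxx.2 hx.2⟩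
    rw [(hF.hd1 x hxIoo).deriv]
    exact hpos x ⟨le_of_lt hxx.1, hxx.2⟩
  exact hmono (left_mem_Icc.mpr (by linarith)) (right_mem_Icc.mpr (by linarith)) (by linarith)

/-- The steady state is nonnegative. -/
lemma phi_nonneg (hF : Facts R Λ Φ) (hΛ : 0 ≤ Λ) : ∀ r ∈ Icc 0 R, 0 ≤ Φ r := by
  have hR := hF.hR
  have h0Icc : (0:ℝ) ∈ Icc (0:ℝ) R := ⟨le_rfl, le_of_lt hR⟩
  obtain ⟨r₀, hr₀Icc, hmin⟩ :=
    isCompact_Icc.exists_isMinOn (nonempty_Icc.mpr (le_of_lt hR)) hF.contPhi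
  intro r hr
  by_contra hcon
  push_neg at hcon
  have hm : Φ r₀ < 0 := lt_of_le_of_lt (hmin hr) hcon
  have hFneg : Φ r₀ - Λ * Real.exp (Φ r₀) < 0 := by
    have : 0 ≤ Λ * Real.exp (Φ r₀) := mul_nonneg hΛ (le_of_lt (Real.exp_pos _))
    linarith
  have hr₀R : r₀ ≠ R := fun h => by rw [h, hF.phiR] at hm; linarith
  have hr₀R' : r₀ < R := lt_of_le_of_ne hr₀Icc.2 hr₀R
  -- in all cases get a critical point with negative second derivative
  obtain ⟨hd1, hd2⟩ : DD R Φ r₀ = 0 ∧ DD R (DD R Φ) r₀ < 0 := by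
    rcases eq_or_lt_of_le hr₀Icc.1 with h0 | h0
    · -- r₀ = 0
      rw [← h0]
      refine ⟨hF.d0, ?_⟩
      rw [hF.dd0]
      have hphi0 : Φ 0 = Φ r₀ := by rw [← h0]
      rw [hphi0]
      linarith
    · -- interior
      have hIoo : r₀ ∈ Ioo 0 R := ⟨h0, hr₀R'⟩
      have hloc : IsLocalMin Φ r₀ := hmin.isLocalMin (Icc_mem_nhds h0 hr₀R')
      have hd0 : deriv Φ r₀ = 0 := hloc.deriv_eq_zero
      have hDD : DD R Φ r₀ = 0 := by rw [DD_eq_deriv hIoo]; exact hd0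
      refine ⟨hDD, ?_⟩
      have := hF.eqn r₀ ⟨h0, le_of_lt hr₀R'⟩
      rw [hDD] at this
      simp only [zero_div, sub_zero] at this
      rw [this]
      exact hFneg
  obtain ⟨y, hy, hlt⟩ := window_right hF ⟨hr₀Icc.1, hr₀R'⟩ hd1 hd2
  exact absurd (hmin hy) (not_le.mpr hlt)

end FMDU


namespace FMDU
open Set Filter Topology

variable {R Λ : ℝ} {Φ : ℝ → ℝ}

noncomputable def EE (R Λ : ℝ) (Φ : ℝ → ℝ) : ℝ → ℝ :=
  fun x => (DD R Φ x)^2/2 + Λ * Real.exp (Φ x) - (Φ x)^2/2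

lemma energy_hasDeriv (hF : Facts R Λ Φ) {r : ℝ} (hr : r ∈ Ioo 0 R) :
    HasDerivAt (EE R Λ Φ) (-(DD R Φ r)^2/r) r := by
  have h1 := hF.hd1 r hr
  have h2 := hF.hd2 r hr
  have hD := (((h2.pow 2).div_const 2).add ((h1.exp).const_mul Λ)).sub ((h1.pow 2).div_const 2)
  have heqn := hF.eqn r ⟨hr.1, le_of_lt hr.2⟩
  refine hD.congr_deriv ?_
  rw [heqn]
  have hr0 : r ≠ 0 := ne_of_gt hr.1
  push_cast
  field_simp
  ring

lemma energy_anti (hF : Facts R Λ Φ) : AntitoneOn (EE R Λ Φ) (Icc 0 R) := by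
  refine antitoneOn_of_deriv_nonpos (convex_Icc _ _) ?_ ?_ ?_
  · refine ContinuousOn.sub (ContinuousOn.add ((hF.cont1.pow 2).div_const 2) ?_)
      ((hF.contPhi.pow 2).div_const 2)
    exact (Real.continuous_exp.comp_continuousOn hF.contPhi).const_smul Λ
  · rw [interior_Icc]
    intro x hx
    exact (energy_hasDeriv hF hx).differentiableAt.differentiableWithinAt
  · intro x hx
    rw [interior_Icc] at hx
    rw [(energy_hasDeriv hF hx).deriv, div_nonpos_iff]
    right
    exact ⟨by nlinarith [sq_nonneg (DD R Φ x)], hx.1.le⟩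

lemma F_hasDeriv (Λ : ℝ) (x : ℝ) :
    HasDerivAt (fun t => t - Λ * Real.exp t) (1 - Λ * Real.exp x) x :=
  (hasDerivAt_id x).sub ((Real.hasDerivAt_exp x).const_mul Λ)

lemma F_lip_aux (hΛ : 0 ≤ Λ) {B t u : ℝ} (htu : t < u) (hu : u ≤ B) :
    |(t - Λ * Real.exp t) - (u - Λ * Real.exp u)| ≤ (1 + Λ * Real.exp B) * |t - u| := by
  obtain ⟨ξ, hξ, hslope⟩ := exists_hasDerivAt_eq_slope (fun x => x - Λ * Real.exp x)
    (fun x => 1 - Λ * Real.exp x) htu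
    (Continuous.continuousOn (by continuity)) (fun x _ => F_hasDeriv Λ x)
  have hsub : (u - Λ * Real.exp u) - (t - Λ * Real.exp t) = (1 - Λ * Real.exp ξ) * (u - t) := by
    rw [hslope, div_mul_cancel₀ _ (sub_ne_zero.mpr (ne_of_gt htu))]
  have habs : |1 - Λ * Real.exp ξ| ≤ 1 + Λ * Real.exp B := by
    have h1 : 0 ≤ Λ * Real.exp ξ := mul_nonneg hΛ (Real.exp_pos _).le
    have h2 : Λ * Real.exp ξ ≤ Λ * Real.exp B :=
      mul_le_mul_of_nonneg_left (Real.exp_le_exp.mpr (by linarith [hξ.2])) hΛ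
    rw [abs_le]
    constructor <;> linarith
  calc |(t - Λ * Real.exp t) - (u - Λ * Real.exp u)|
      = |1 - Λ * Real.exp ξ| * |u - t| := by rw [abs_sub_comm, hsub, abs_mul]
    _ ≤ (1 + Λ * Real.exp B) * |u - t| := by
        apply mul_le_mul_of_nonneg_right habs (abs_nonneg _)
    _ = (1 + Λ * Real.exp B) * |t - u| := by rw [abs_sub_comm]

lemma F_lip (hΛ : 0 ≤ Λ) {B t u : ℝ} (ht : t ≤ B) (hu : u ≤ B) :
    |(t - Λ * Real.exp t) - (u - Λ * Real.exp u)| ≤ (1 + Λ * Real.exp B) * |t - u| := by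
  rcases lt_trichotomy t u with h | h | h
  · exact F_lip_aux hΛ h hu
  · subst h; simp
  · rw [abs_sub_comm, abs_sub_comm t u]
    exact F_lip_aux hΛ h ht

lemma F_nonneg_seg (hΛ : 0 < Λ) {s₁ sb : ℝ} (h0 : s₁ ≤ sb)
    (hs₁ : s₁ - Λ * Real.exp s₁ = 0) (hsb : 0 ≤ sb - Λ * Real.exp sb) :
    ∀ x ∈ Icc s₁ sb, 0 ≤ x - Λ * Real.exp x := by
  intro x hx
  by_contra hcon
  push_neg at hcon
  have hx1 : s₁ < x := by
    rcases eq_or_lt_of_le hx.1 with h | h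
    · rw [← h] at hcon; linarith
    · exact h
  have hx2 : x < sb := by
    rcases eq_or_lt_of_le hx.2 with h | h
    · rw [h] at hcon; linarith
    · exact h
  obtain ⟨ξ₁, hξ₁, hs1⟩ := exists_hasDerivAt_eq_slope (fun t => t - Λ * Real.exp t)
    (fun t => 1 - Λ * Real.exp t) hx1
    (Continuous.continuousOn (by continuity)) (fun t _ => F_hasDeriv Λ t)
  obtain ⟨ξ₂, hξ₂, hs2⟩ := exists_hasDerivAt_eq_slope (fun t => t - Λ * Real.exp t)
    (fun t => 1 - Λ * Real.exp t) hx2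
    (Continuous.continuousOn (by continuity)) (fun t _ => F_hasDeriv Λ t)
  have hneg : (1:ℝ) - Λ * Real.exp ξ₁ < 0 := by
    rw [hs1, hs₁]
    apply div_neg_of_neg_of_pos
    · simpa using hcon
    · linarith
  have hpos : (0:ℝ) < 1 - Λ * Real.exp ξ₂ := by
    rw [hs2]
    apply div_pos (by linarith) (by linarith)
  have hlt : ξ₁ < ξ₂ := lt_trans hξ₁.2 hξ₂.1
  have := Real.exp_lt_exp.mpr hlt
  nlinarith [Real.exp_pos ξ₁]

set_option maxHeartbeats 1000000 in
/-- If `Φ` has an interior critical point at value `s` with `F(s) = 0`,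
then `Φ` is constant to the right (Gronwall). -/
lemma eq_const_of_crit (hF : Facts R Λ Φ) (hΛ : 0 ≤ Λ) {c : ℝ} (hc : c ∈ Ioo 0 R)
    (h1 : DD R Φ c = 0) (h2 : Φ c - Λ * Real.exp (Φ c) = 0) : Φ R = Φ c := by
  obtain ⟨xM, hxM, hmax⟩ := isCompact_Icc.exists_isMaxOn (nonempty_Icc.mpr hF.hR.le) hF.contPhi
  set B := Φ xM with hB
  have hBb : ∀ x ∈ Icc (0:ℝ) R, Φ x ≤ B := fun x hx => hmax hx
  set K := 1 + Λ * Real.exp B with hK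
  have hK1 : 1 ≤ K := by
    have : 0 ≤ Λ * Real.exp B := mul_nonneg hΛ (Real.exp_pos _).le
    simp only [hK]; linarith
  set C := 1 + K with hC
  set s := Φ c with hs
  set z : ℝ → ℝ := fun x => (Φ x - s)^2 + (DD R Φ x)^2 with hz
  set g : ℝ → ℝ := fun x => z x * Real.exp (-C * x) with hg
  have hcIcc : c ∈ Icc (0:ℝ) R := ⟨hc.1.le, hc.2.le⟩
  have hzD : ∀ x ∈ Ioo c R, HasDerivAt z
      (2*(Φ x - s)*(DD R Φ x) + 2*(DD R Φ x)*(DD R (DD R Φ) x)) x := by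
    intro x hx
    have hxIoo : x ∈ Ioo 0 R := ⟨lt_trans hc.1 hx.1, hx.2⟩
    have hd1 := hF.hd1 x hxIoo
    have hd2 := hF.hd2 x hxIoo
    have := ((hd1.sub_const s).pow 2).add (hd2.pow 2)
    refine this.congr_deriv ?_
    push_cast
    ring
  have hexpD : ∀ x : ℝ, HasDerivAt (fun y => Real.exp (-C * y)) (Real.exp (-C * x) * (-C)) x := by
    intro x
    have : HasDerivAt (fun y : ℝ => -C * y) (-C) x := by
      simpa using (hasDerivAt_id x).const_mul (-C)
    simpa using this.exp
  have hganti : AntitoneOn g (Icc c R) := by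
    refine antitoneOn_of_deriv_nonpos (convex_Icc _ _) ?_ ?_ ?_
    · refine ContinuousOn.mul ?_ (Continuous.continuousOn (by continuity))
      refine ContinuousOn.add ?_ ((hF.cont1.mono (Icc_subset_Icc hc.1.le le_rfl)).pow 2)
      exact (((hF.contPhi.mono (Icc_subset_Icc hc.1.le le_rfl)).sub continuousOn_const).pow 2)
    · rw [interior_Icc]
      intro x hx
      exact (((hzD x hx).mul (hexpD x)).differentiableAt).differentiableWithinAt
    · intro x hx
      rw [interior_Icc] at hx
      rw [show deriv g x = _ from ((hzD x hx).mul (hexpD x)).deriv]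
      have hxIoo : x ∈ Ioo 0 R := ⟨lt_trans hc.1 hx.1, hx.2⟩
      -- key bound z' ≤ C * z
      have heqn := hF.eqn x ⟨hxIoo.1, hxIoo.2.le⟩
      have hd : |(Φ x - Λ * Real.exp (Φ x)) - (s - Λ * Real.exp s)| ≤ K * |Φ x - s| := by
        simp only [hK]
        exact F_lip hΛ (hBb x ⟨hxIoo.1.le, hxIoo.2.le⟩) (hBb c hcIcc)
      set a := Φ x - s with ha
      set p := DD R Φ x with hp
      set d := (Φ x - Λ * Real.exp (Φ x)) - (s - Λ * Real.exp s) with hdd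
      have hΦ'' : DD R (DD R Φ) x = d - p/x := by
        rw [heqn]
        simp only [hdd, hp]
        rw [h2]
        ring
      rw [hΦ'']
      have hb1 : 2*a*p ≤ a^2 + p^2 := by nlinarith [sq_nonneg (a - p)]
      have hb2 : 2*p*d ≤ K*(a^2 + p^2) := by
        have e1 : 2*p*d ≤ 2 * |p| * |d| := by
          calc 2*p*d ≤ 2 * |p * d| := by
                have := le_abs_self (p*d); linarith
            _ = 2 * |p| * |d| := by rw [abs_mul]; ring
        have e2 : 2 * |p| * |d| ≤ 2 * |p| * (K * |a|) := by
          apply mul_le_mul_of_nonneg_left hd (by positivity)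
        have e3 : 2 * |p| * (K * |a|) ≤ K*(a^2+p^2) := by
          nlinarith [sq_nonneg (|a| - |p|), sq_abs a, sq_abs p, abs_nonneg a, abs_nonneg p]
        linarith
      have hb3 : 0 ≤ 2*p^2/x := div_nonneg (by positivity) hxIoo.1.le
      have hzbound : 2*a*p + 2*p*(d - p/x) ≤ C * z x := by
        have expand : 2*p*(d - p/x) = 2*p*d - 2*p^2/x := by ring
        have hzx : z x = a^2 + p^2 := by simp only [hz, ha, hp]
        rw [expand, hzx, hC]
        have hexpand2 : (1+K)*(a^2+p^2) = (a^2+p^2) + K*(a^2+p^2) := by ring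
        clear_value a p d K C s z g B
        linarith [hb1, hb2, hb3]
      have hexp : (0:ℝ) < Real.exp (-C * x) := Real.exp_pos _
      have hzpos : 0 ≤ z x := by positivity
      calc (2*(Φ x - s)*(DD R Φ x) + 2*(DD R Φ x)*(d - p/x)) * Real.exp (-C*x)
            + z x * (Real.exp (-C*x) * (-C))
          = ((2*a*p + 2*p*(d - p/x)) - C * z x) * Real.exp (-C*x) := by
            simp only [ha, hp]; ring
        _ ≤ 0 := by
            apply mul_nonpos_of_nonpos_of_nonneg
            · linarith
            · exact hexp.le
  have hgc : g c = 0 := by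
    simp only [hg, hz]
    rw [h1, show Φ c - s = 0 by simp [hs]]
    ring
  have hgR : g R ≤ 0 := by
    have := hganti (left_mem_Icc.mpr hc.2.le) (right_mem_Icc.mpr hc.2.le) hc.2.le
    rwa [hgc] at this
  have hzR : z R = 0 := by
    have hexp : (0:ℝ) < Real.exp (-C * R) := Real.exp_pos _
    have hzpos : 0 ≤ z R := by positivity
    by_contra hne
    have : 0 < z R := lt_of_le_of_ne hzpos (Ne.symm hne)
    have : 0 < g R := by simp only [hg]; positivity
    linarith
  have : (Φ R - s)^2 = 0 := by
    have h2' : (0:ℝ) ≤ (DD R Φ R)^2 := sq_nonneg _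
    have h1' : (0:ℝ) ≤ (Φ R - s)^2 := sq_nonneg _
    simp only [hz] at hzR
    linarith
  have := sq_eq_zero_iff.mp this
  linarith

end FMDU


namespace FMDU
open Set Filter Topology

variable {R Λ : ℝ} {Φ : ℝ → ℝ}

lemma slope_nonneg_right {f : ℝ → ℝ} {b c D : ℝ} (hbc : b < c)
    (hsub : Ioo b c ⊆ Icc 0 R)
    (hD : HasDerivWithinAt f D (Icc 0 R) b) (hfb : f b = 0)
    (hpos : ∀ x ∈ Ioo b c, 0 ≤ f x) : 0 ≤ D := by
  rw [hasDerivWithinAt_iff_tendsto_slope] at hD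
  have hmono : 𝓝[Ioo b c] b ≤ 𝓝[Icc (0:ℝ) R \ {b}] b :=
    nhdsWithin_mono _ (fun x hx => ⟨hsub hx, by simp [ne_of_gt hx.1]⟩)
  haveI hne : (𝓝[Ioo b c] b).NeBot := by
    refine mem_closure_iff_nhdsWithin_neBot.mp ?_
    rw [closure_Ioo (ne_of_lt hbc)]
    exact ⟨le_rfl, hbc.le⟩
  refine ge_of_tendsto (hD.mono_left hmono) ?_
  filter_upwards [self_mem_nhdsWithin] with x hx
  have h1 : 0 ≤ f x := hpos x hx
  have h2 : 0 < x - b := by linarith [hx.1]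
  rw [slope_def_field, hfb, sub_zero]
  exact div_nonneg h1 h2.le

lemma slope_nonpos_right {f : ℝ → ℝ} {b c D : ℝ} (hbc : b < c)
    (hsub : Ioo b c ⊆ Icc 0 R)
    (hD : HasDerivWithinAt f D (Icc 0 R) b) (hfb : f b = 0)
    (hneg : ∀ x ∈ Ioo b c, f x ≤ 0) : D ≤ 0 := by
  have := slope_nonneg_right hbc hsub hD.neg (by rw [Pi.neg_apply, hfb, neg_zero])
    (fun x hx => by simp [hneg x hx])
  linarith

lemma slope_nonpos_left {f : ℝ → ℝ} {a c D : ℝ} (hac : a < c)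
    (hsub : Ioo a c ⊆ Icc 0 R)
    (hD : HasDerivWithinAt f D (Icc 0 R) c) (hfc : f c = 0)
    (hpos : ∀ x ∈ Ioo a c, 0 ≤ f x) : D ≤ 0 := by
  rw [hasDerivWithinAt_iff_tendsto_slope] at hD
  have hmono : 𝓝[Ioo a c] c ≤ 𝓝[Icc (0:ℝ) R \ {c}] c :=
    nhdsWithin_mono _ (fun x hx => ⟨hsub hx, by simp [ne_of_lt hx.2]⟩)
  haveI hne : (𝓝[Ioo a c] c).NeBot := by
    refine mem_closure_iff_nhdsWithin_neBot.mp ?_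
    rw [closure_Ioo (ne_of_lt hac)]
    exact ⟨hac.le, le_rfl⟩
  refine le_of_tendsto (hD.mono_left hmono) ?_
  filter_upwards [self_mem_nhdsWithin] with x hx
  have h1 : 0 ≤ f x := hpos x hx
  have h2 : x - c < 0 := by linarith [hx.2]
  rw [slope_def_field, hfc, sub_zero]
  exact div_nonpos_of_nonneg_of_nonpos h1 h2.le

lemma slope_nonneg_left {f : ℝ → ℝ} {a c D : ℝ} (hac : a < c)
    (hsub : Ioo a c ⊆ Icc 0 R)
    (hD : HasDerivWithinAt f D (Icc 0 R) c) (hfc : f c = 0)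
    (hneg : ∀ x ∈ Ioo a c, f x ≤ 0) : 0 ≤ D := by
  have := slope_nonpos_left hac hsub hD.neg (by rw [Pi.neg_apply, hfc, neg_zero])
    (fun x hx => by simp [hneg x hx])
  linarith

lemma energy_contOn (hF : Facts R Λ Φ) : ContinuousOn (EE R Λ Φ) (Icc 0 R) := by
  refine ContinuousOn.sub (ContinuousOn.add ((hF.cont1.pow 2).div_const 2) ?_)
    ((hF.contPhi.pow 2).div_const 2)
  exact (Real.continuous_exp.comp_continuousOn hF.contPhi).const_smul Λ

/-- Main monotonicity: for `Λ > 0` the steady state is strictly decreasing. -/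
lemma phi_deriv_neg (hF : Facts R Λ Φ) (hΛ : 0 < Λ) :
    ∀ r ∈ Ioc 0 R, DD R Φ r < 0 := by
  have hnn := phi_nonneg hF hΛ.le
  have hR := hF.hR
  by_contra hcon
  push_neg at hcon
  obtain ⟨c₀, hc₀, hc₀pos⟩ := hcon
  have hΦ'R : DD R Φ R ≤ 0 := by
    refine slope_nonpos_left (R := R) hR Ioo_subset_Icc_self
      (hF.hdw1 R ⟨hR.le, le_rfl⟩) hF.phiR ?_
    intro x hx
    exact hnn x (Ioo_subset_Icc_self hx)
  -- the last point where Φ' is nonnegative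
  set S := Icc c₀ R ∩ DD R Φ ⁻¹' (Ici 0) with hSdef
  have hSsub : Icc c₀ R ⊆ Icc (0:ℝ) R := Icc_subset_Icc hc₀.1.le le_rfl
  have hSclosed : IsClosed S :=
    (hF.cont1.mono hSsub).preimage_isClosed_of_isClosed isClosed_Icc isClosed_Ici
  have hc₀S : c₀ ∈ S := ⟨⟨le_rfl, hc₀.2⟩, hc₀pos⟩
  have hSbdd : BddAbove S := ⟨R, fun x hx => hx.1.2⟩
  set c := sSup S with hcdef
  have hcS : c ∈ S := hSclosed.csSup_mem ⟨c₀, hc₀S⟩ hSbdd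
  have hc : c ∈ Ioc 0 R := ⟨lt_of_lt_of_le hc₀.1 hcS.1.1, hcS.1.2⟩
  have hcIcc : c ∈ Icc (0:ℝ) R := ⟨hc.1.le, hc.2⟩
  have hafter : ∀ x ∈ Ioc c R, DD R Φ x < 0 := by
    intro x hx
    by_contra h
    push_neg at h
    have hxS : x ∈ S := ⟨⟨le_trans hcS.1.1 hx.1.le, hx.2⟩, h⟩
    have := le_csSup hSbdd hxS
    linarith [hx.1]
  have hΦ'c : DD R Φ c = 0 := by
    rcases eq_or_lt_of_le hc.2 with hcR | hcR
    · exact le_antisymm (by rw [hcR]; exact hΦ'R) hcS.2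
    · by_contra hne
      have hpos : 0 < DD R Φ c := lt_of_le_of_ne hcS.2 (Ne.symm hne)
      have hev : ∀ᶠ x in 𝓝[Icc (0:ℝ) R] c, 0 < DD R Φ x :=
        continuousWithinAt_const.eventually_lt (hF.cont1 c hcIcc) hpos
      have hmono : 𝓝[Ioo c R] c ≤ 𝓝[Icc (0:ℝ) R] c :=
        nhdsWithin_mono _ (fun x hx => ⟨le_trans hc.1.le hx.1.le, hx.2.le⟩)
      haveI hne2 : (𝓝[Ioo c R] c).NeBot := by
        refine mem_closure_iff_nhdsWithin_neBot.mp ?_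
        rw [closure_Ioo (ne_of_lt hcR)]
        exact ⟨le_rfl, hcR.le⟩
      obtain ⟨x, hx1, hx2⟩ := ((hev.filter_mono hmono).and self_mem_nhdsWithin).exists
      exact absurd (hafter x ⟨hx2.1, hx2.2.le⟩) (not_lt.mpr hx1.le)
  rcases eq_or_lt_of_le hc.2 with hcR | hcR
  · -- c = R : contradiction via window_left at R
    have heq := hF.eqn R ⟨hR, le_rfl⟩
    have hΦ'Rz : DD R Φ R = 0 := hcR ▸ hΦ'c
    have hΦ''R : DD R (DD R Φ) R < 0 := by
      rw [heq, hF.phiR, hΦ'Rz]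
      simp [Real.exp_zero]
      linarith
    obtain ⟨δ, hδ, h0δ, hwin, hlt⟩ := window_left hF ⟨hR, le_rfl⟩ hΦ'Rz hΦ''R
    have := hnn (R - δ) ⟨h0δ, by linarith⟩
    rw [hF.phiR] at hlt
    linarith
  · -- c < R : main energy argument
    have hcIoo : c ∈ Ioo 0 R := ⟨hc.1, hcR⟩
    have hanti : StrictAntiOn Φ (Icc c R) := by
      refine strictAntiOn_of_deriv_neg (convex_Icc _ _)
        (hF.contPhi.mono (Icc_subset_Icc hc.1.le le_rfl)) ?_
      intro x hx
      rw [interior_Icc] at hx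
      rw [(hF.hd1 x ⟨lt_trans hc.1 hx.1, hx.2⟩).deriv]
      exact hafter x ⟨hx.1, hx.2.le⟩
    have hΦc_pos : 0 < Φ c := by
      have := hanti (left_mem_Icc.mpr hcR.le) (right_mem_Icc.mpr hcR.le) hcR
      rw [hF.phiR] at this
      linarith
    have hΦ''c : DD R (DD R Φ) c ≤ 0 := by
      refine slope_nonpos_right (R := R) hcR (fun x hx => ⟨le_trans hc.1.le hx.1.le, hx.2.le⟩)
        (hF.hdw2 c hcIcc) hΦ'c ?_
      intro x hx
      exact (hafter x ⟨hx.1, hx.2.le⟩).le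
    have heqc := hF.eqn c ⟨hc.1, hcR.le⟩
    rw [hΦ'c] at heqc
    simp only [zero_div, sub_zero] at heqc
    have hFc : Φ c - Λ * Real.exp (Φ c) ≤ 0 := by rw [← heqc]; exact hΦ''c
    rcases eq_or_lt_of_le hFc with hF0 | hFneg
    · -- Gronwall case
      have := eq_const_of_crit hF hΛ.le hcIoo hΦ'c (by linarith [hF0])
      rw [hF.phiR] at this
      linarith
    · -- energy case
      have hΦ''c_neg : DD R (DD R Φ) c < 0 := by rw [heqc]; exact hFneg
      obtain ⟨δ, hδ, h0δ, hwin, -⟩ := window_left hF ⟨hc.1, hcR.le⟩ hΦ'c hΦ''c_neg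
      set T := Icc (0:ℝ) (c - δ) ∩ DD R Φ ⁻¹' (Iic 0) with hTdef
      have hTsub : Icc (0:ℝ) (c - δ) ⊆ Icc (0:ℝ) R :=
        Icc_subset_Icc le_rfl (by linarith [hc.2])
      have hTclosed : IsClosed T :=
        (hF.cont1.mono hTsub).preimage_isClosed_of_isClosed isClosed_Icc isClosed_Iic
      have h0T : (0:ℝ) ∈ T := ⟨⟨le_rfl, h0δ⟩, by simp [hF.d0]⟩
      have hTbdd : BddAbove T := ⟨c - δ, fun x hx => hx.1.2⟩
      set b := sSup T with hbdef
      have hbT : b ∈ T := hTclosed.csSup_mem ⟨0, h0T⟩ hTbdd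
      have hb0 : 0 ≤ b := hbT.1.1
      have hbc : b < c := lt_of_le_of_lt hbT.1.2 (by linarith)
      have hbIcc : b ∈ Icc (0:ℝ) R := ⟨hb0, by linarith [hbT.1.2, hc.2]⟩
      have hIoobc : Ioo b c ⊆ Icc (0:ℝ) R :=
        fun x hx => ⟨le_trans hb0 hx.1.le, le_trans hx.2.le hc.2⟩
      have hΦ'mid : ∀ x ∈ Ioo b c, 0 < DD R Φ x := by
        intro x hx
        rcases le_or_gt x (c - δ) with hxcδ | hxcδ
        · by_contra hle
          push_neg at hle
          have hxT : x ∈ T := ⟨⟨le_trans hb0 hx.1.le, hxcδ⟩, hle⟩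
          have := le_csSup hTbdd hxT
          linarith [hx.1]
        · exact hwin x ⟨hxcδ.le, hx.2⟩
      have hΦ'b : DD R Φ b = 0 := by
        refine le_antisymm hbT.2 ?_
        haveI hne2 : (𝓝[Ioo b c] b).NeBot := by
          refine mem_closure_iff_nhdsWithin_neBot.mp ?_
          rw [closure_Ioo (ne_of_lt hbc)]
          exact ⟨le_rfl, hbc.le⟩
        have hmono : 𝓝[Ioo b c] b ≤ 𝓝[Icc (0:ℝ) R] b := nhdsWithin_mono _ hIoobc
        refine ge_of_tendsto (((hF.cont1 b hbIcc)).mono_left hmono) ?_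
        filter_upwards [self_mem_nhdsWithin] with x hx
        exact (hΦ'mid x hx).le
      have hΦ''b : 0 ≤ DD R (DD R Φ) b := by
        refine slope_nonneg_right (R := R) hbc hIoobc (hF.hdw2 b hbIcc) hΦ'b ?_
        intro x hx
        exact (hΦ'mid x hx).le
      have hFb : 0 ≤ Φ b - Λ * Real.exp (Φ b) := by
        rcases eq_or_lt_of_le hb0 with hb00 | hb0pos
        · have hdd := hF.dd0
          rw [hb00] at hdd
          rw [hdd] at hΦ''b
          linarith
        · have heqb := hF.eqn b ⟨hb0pos, hbIcc.2⟩
          rw [hΦ'b] at heqb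
          simp only [zero_div, sub_zero] at heqb
          rw [← heqb]
          exact hΦ''b
      have hmonoPhi : StrictMonoOn Φ (Icc b c) := by
        refine strictMonoOn_of_deriv_pos (convex_Icc _ _)
          (hF.contPhi.mono (fun x hx => ⟨le_trans hb0 hx.1, le_trans hx.2 hc.2⟩)) ?_
        intro x hx
        rw [interior_Icc] at hx
        rw [(hF.hd1 x ⟨lt_of_le_of_lt hb0 hx.1, lt_trans hx.2 hcR⟩).deriv]
        exact hΦ'mid x hx
      have hΦbc : Φ b < Φ c :=
        hmonoPhi (left_mem_Icc.mpr hbc.le) (right_mem_Icc.mpr hbc.le) hbc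
      have hΦb0 : 0 ≤ Φ b := hnn b hbIcc
      have hcontF : ContinuousOn (fun t => t - Λ * Real.exp t) (Icc 0 (Φ b)) :=
        (continuous_id.sub (continuous_const.mul Real.continuous_exp)).continuousOn
      obtain ⟨s₁, hs₁mem, hs₁⟩ := intermediate_value_Icc hΦb0 hcontF
        (by
          refine ⟨?_, hFb⟩
          show (0:ℝ) - Λ * Real.exp 0 ≤ 0
          rw [Real.exp_zero]
          linarith)
      have hs₁pos : 0 < s₁ := by
        rcases eq_or_lt_of_le hs₁mem.1 with h | h
        · exfalso
          rw [← h] at hs₁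
          simp [Real.exp_zero] at hs₁
          linarith
        · exact h
      have hs₁c : s₁ < Φ c := lt_of_le_of_lt hs₁mem.2 hΦbc
      obtain ⟨r₁, hr₁mem, hΦr₁⟩ := intermediate_value_Icc' hcR.le
        (hF.contPhi.mono (Icc_subset_Icc hc.1.le le_rfl))
        (⟨by rw [hF.phiR]; exact hs₁pos.le, hs₁c.le⟩)
      have hr₁c : c < r₁ := by
        rcases eq_or_lt_of_le hr₁mem.1 with h | h
        · exfalso; rw [← h] at hΦr₁; linarith
        · exact h
      have hr₁R : r₁ < R := by
        rcases eq_or_lt_of_le hr₁mem.2 with h | h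
        · exfalso; rw [h, hF.phiR] at hΦr₁; linarith
        · exact h
      have hEb : EE R Λ Φ b = Λ * Real.exp (Φ b) - (Φ b)^2/2 := by
        simp [EE, hΦ'b]
      have hEc : EE R Λ Φ c = Λ * Real.exp (Φ c) - (Φ c)^2/2 := by
        simp [EE, hΦ'c]
      have hEr₁ : Λ * Real.exp s₁ - s₁^2/2 < EE R Λ Φ r₁ := by
        have hΦ'r₁ : DD R Φ r₁ < 0 := hafter r₁ ⟨hr₁c, hr₁mem.2⟩
        have hsq : 0 < (DD R Φ r₁)^2 := pow_two_pos_of_ne_zero (ne_of_lt hΦ'r₁)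
        simp only [EE, hΦr₁]
        linarith
      have hEstrict : EE R Λ Φ c < EE R Λ Φ b := by
        have hsa : StrictAntiOn (EE R Λ Φ) (Icc b c) := by
          refine strictAntiOn_of_deriv_neg (convex_Icc _ _)
            ((energy_contOn hF).mono (fun x hx => ⟨le_trans hb0 hx.1, le_trans hx.2 hc.2⟩)) ?_
          intro x hx
          rw [interior_Icc] at hx
          have hxIoo : x ∈ Ioo 0 R := ⟨lt_of_le_of_lt hb0 hx.1, lt_trans hx.2 hcR⟩
          rw [(energy_hasDeriv hF hxIoo).deriv]
          have hsq : 0 < (DD R Φ x)^2 := pow_two_pos_of_ne_zero (ne_of_gt (hΦ'mid x hx))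
          apply div_neg_of_neg_of_pos (by linarith) hxIoo.1
        exact hsa (left_mem_Icc.mpr hbc.le) (right_mem_Icc.mpr hbc.le) hbc
      have hEmono : EE R Λ Φ r₁ ≤ EE R Λ Φ c :=
        energy_anti hF hcIcc ⟨le_trans hc.1.le hr₁mem.1, hr₁mem.2⟩ hr₁c.le
      have hHanti : Λ * Real.exp (Φ b) - (Φ b)^2/2 ≤ Λ * Real.exp s₁ - s₁^2/2 := by
        rcases eq_or_lt_of_le hs₁mem.2 with heq | hlt
        · rw [heq]
        · have hFseg := F_nonneg_seg hΛ hs₁mem.2 hs₁ hFb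
          have hH : AntitoneOn (fun t => Λ * Real.exp t - t^2/2) (Icc s₁ (Φ b)) := by
            refine antitoneOn_of_deriv_nonpos (convex_Icc _ _)
              (((continuous_const.mul Real.continuous_exp).sub
                ((continuous_pow 2).div_const 2)).continuousOn) ?_ ?_
            · intro x hx
              exact (((Real.hasDerivAt_exp x).const_mul Λ).sub
                ((hasDerivAt_pow 2 x).div_const 2)).differentiableAt.differentiableWithinAt
            · intro x hx
              rw [interior_Icc] at hx
              rw [show deriv (fun t => Λ * Real.exp t - t ^ 2 / 2) x = _ from
                (((Real.hasDerivAt_exp x).const_mul Λ).sub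
                ((hasDerivAt_pow 2 x).div_const 2)).deriv]
              have := hFseg x ⟨hx.1.le, hx.2.le⟩
              push_cast
              linarith
          exact hH (left_mem_Icc.mpr hs₁mem.2) (right_mem_Icc.mpr hs₁mem.2) hs₁mem.2
      linarith

end FMDU


namespace FMDU
open Set Filter Topology

variable {R Λ : ℝ} {Φ : ℝ → ℝ}

set_option maxHeartbeats 1000000 in
/-- Key comparison lemma: any Dirichlet solution of the mode-`n` linearized equation
is nonpositive. -/
lemma key (hR : 0 < R) (hΛ : 0 ≤ Λ) (hΦ : IsRadialSteadyState R Λ Φ)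
    (n : ℕ) (hn : 1 ≤ n) (w : ℝ → ℝ)
    (hw1 : ContDiffOn ℝ 1 w (Set.Icc 0 R)) (hw2 : ContDiffOn ℝ 2 w (Set.Ioo 0 R))
    (hweq : ∀ r ∈ Set.Ioo (0:ℝ) R, -(deriv (deriv w) r) - deriv w r / r
      + ((n:ℝ)^2/r^2+1) * w r = Λ * Real.exp (Φ r) * w r)
    (hw0 : w 0 = 0) (hwR : w R = 0) :
    ∀ r ∈ Set.Icc (0:ℝ) R, w r ≤ 0 := by
  have huniq : UniqueDiffOn ℝ (Icc (0:ℝ) R) := uniqueDiffOn_Icc hR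
  have contw : ContinuousOn w (Icc 0 R) := hw1.continuousOn
  have contw' : ContinuousOn (DD R w) (Icc 0 R) :=
    hw1.continuousOn_derivWithin huniq le_rfl
  have hwd1 : ∀ r ∈ Ioo 0 R, HasDerivAt w (DD R w r) r := by
    intro r hr
    have : DifferentiableAt ℝ w r :=
      (hw1.differentiableOn one_ne_zero).differentiableAt (Icc_mem_nhds hr.1 hr.2)
    rw [DD_eq_deriv hr]
    exact this.hasDerivAt
  have hwdw : ∀ r ∈ Icc (0:ℝ) R, HasDerivWithinAt w (DD R w r) (Icc 0 R) r :=
    fun r hr => ((hw1.differentiableOn one_ne_zero) r hr).hasDerivWithinAt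
  have hwEq : ∀ r ∈ Ioo (0:ℝ) R, DD R w r = deriv w r := fun r hr => DD_eq_deriv hr
  have hderivC1 : ContDiffOn ℝ 1 (deriv w) (Ioo 0 R) :=
    hw2.deriv_of_isOpen isOpen_Ioo (m := 1) (by norm_num)
  have hwd2 : ∀ r ∈ Ioo (0:ℝ) R, HasDerivAt (DD R w)
      (-(DD R w r)/r + (((n:ℝ)^2/r^2+1) - Λ * Real.exp (Φ r)) * w r) r := by
    intro r hr
    have hda : DifferentiableAt ℝ (deriv w) r :=
      (hderivC1.differentiableOn one_ne_zero).differentiableAt (isOpen_Ioo.mem_nhds hr)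
    have hev : DD R w =ᶠ[𝓝 r] deriv w := eventually_of_mem (isOpen_Ioo.mem_nhds hr) hwEq
    have h1 : HasDerivAt (DD R w) (deriv (deriv w) r) r :=
      hda.hasDerivAt.congr_of_eventuallyEq hev
    have h2 : deriv (deriv w) r
        = -(DD R w r)/r + (((n:ℝ)^2/r^2+1) - Λ * Real.exp (Φ r)) * w r := by
      have hq := hweq r hr
      rw [DD_eq_deriv hr]
      have hexpand : (((n:ℝ)^2/r^2+1) - Λ * Real.exp (Φ r)) * w r
          = ((n:ℝ)^2/r^2+1) * w r - Λ * Real.exp (Φ r) * w r := by ring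
      rw [hexpand, neg_div]
      linarith
    rw [← h2]
    exact h1
  -- suppose w is positive somewhere
  by_contra hcon
  push_neg at hcon
  obtain ⟨rs, hrsIcc, hrs⟩ := hcon
  have hrsIoo : rs ∈ Ioo 0 R := by
    constructor
    · rcases eq_or_lt_of_le hrsIcc.1 with h | h
      · exfalso; rw [← h, hw0] at hrs; linarith
      · exact h
    · rcases eq_or_lt_of_le hrsIcc.2 with h | h
      · exfalso; rw [h, hwR] at hrs; linarith
      · exact h
  rcases eq_or_lt_of_le hΛ with hΛ0 | hΛpos
  · -- Λ = 0 : maximum principle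
    obtain ⟨r₀, hr₀Icc, hmax⟩ :=
      isCompact_Icc.exists_isMaxOn (nonempty_Icc.mpr hR.le) contw
    have hwr₀ : 0 < w r₀ := lt_of_lt_of_le hrs (hmax hrsIcc)
    have hr₀Ioo : r₀ ∈ Ioo 0 R := by
      constructor
      · rcases eq_or_lt_of_le hr₀Icc.1 with h | h
        · exfalso; rw [← h, hw0] at hwr₀; linarith
        · exact h
      · rcases eq_or_lt_of_le hr₀Icc.2 with h | h
        · exfalso; rw [h, hwR] at hwr₀; linarith
        · exact h
    have hd0 : DD R w r₀ = 0 := by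
      rw [DD_eq_deriv hr₀Ioo]
      exact (hmax.isLocalMax (Icc_mem_nhds hr₀Ioo.1 hr₀Ioo.2)).deriv_eq_zero
    set G : ℝ → ℝ := fun x => -(DD R w x)/x + (((n:ℝ)^2/x^2+1) - Λ * Real.exp (Φ x)) * w x
      with hGdef
    have hGcont : ContinuousOn G (Ioo 0 R) := by
      refine ContinuousOn.add ((contw'.mono Ioo_subset_Icc_self).neg.div
        continuousOn_id (fun x hx => ne_of_gt hx.1)) ?_
      refine ContinuousOn.mul (ContinuousOn.sub (ContinuousOn.add ?_ continuousOn_const) ?_)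
        (contw.mono Ioo_subset_Icc_self)
      · exact continuousOn_const.div (continuousOn_pow 2)
          (fun x hx => pow_ne_zero 2 (ne_of_gt hx.1))
      · exact continuousOn_const.mul (Real.continuous_exp.comp_continuousOn
          ((hΦ.1.continuousOn).mono Ioo_subset_Icc_self))
    have hGpos : 0 < G r₀ := by
      simp only [hGdef, hd0, neg_zero, zero_div, zero_add, ← hΛ0, zero_mul, sub_zero]
      have h1 : 0 < (n:ℝ)^2/r₀^2 + 1 := by positivity
      exact mul_pos h1 hwr₀
    have hev : ∀ᶠ x in 𝓝[Ioo (0:ℝ) R] r₀, 0 < G x :=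
      continuousWithinAt_const.eventually_lt (hGcont r₀ hr₀Ioo) hGpos
    obtain ⟨ε, hε, hball⟩ := Metric.mem_nhdsWithin_iff.mp hev
    set δ := min (ε/2) ((R - r₀)/2) with hδdef
    have hδ : 0 < δ := lt_min (by linarith) (by linarith [hr₀Ioo.2])
    have hδR : r₀ + δ < R := by
      have : δ ≤ (R - r₀)/2 := min_le_right _ _
      linarith [hr₀Ioo.2]
    have hsub : Icc r₀ (r₀ + δ) ⊆ Ioo 0 R :=
      fun x hx => ⟨lt_of_lt_of_le hr₀Ioo.1 hx.1, lt_of_le_of_lt hx.2 hδR⟩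
    have hGwin : ∀ x ∈ Icc r₀ (r₀ + δ), 0 < G x := by
      intro x hx
      refine hball ⟨?_, hsub hx⟩
      have : δ ≤ ε/2 := min_le_left _ _
      simp only [Metric.mem_ball, Real.dist_eq, abs_lt]
      constructor <;> linarith [hx.1, hx.2, hε]
    have hmono1 : StrictMonoOn (DD R w) (Icc r₀ (r₀ + δ)) := by
      refine strictMonoOn_of_deriv_pos (convex_Icc _ _)
        (contw'.mono (fun x hx => Ioo_subset_Icc_self (hsub hx))) ?_
      intro x hx
      rw [interior_Icc] at hx
      have hxI := hsub (Ioo_subset_Icc_self hx)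
      rw [(hwd2 x hxI).deriv]
      exact hGwin x (Ioo_subset_Icc_self hx)
    have hw'pos : ∀ x ∈ Ioo r₀ (r₀ + δ), 0 < DD R w x := by
      intro x hx
      have := hmono1 (left_mem_Icc.mpr (by linarith)) (Ioo_subset_Icc_self hx) hx.1
      rwa [hd0] at this
    have hmono2 : StrictMonoOn w (Icc r₀ (r₀ + δ)) := by
      refine strictMonoOn_of_deriv_pos (convex_Icc _ _)
        (contw.mono (fun x hx => Ioo_subset_Icc_self (hsub hx))) ?_
      intro x hx
      rw [interior_Icc] at hx
      rw [(hwd1 x (hsub (Ioo_subset_Icc_self hx))).deriv]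
      exact hw'pos x hx
    have hlt := hmono2 (left_mem_Icc.mpr (by linarith)) (right_mem_Icc.mpr (by linarith))
      (by linarith)
    have := hmax (Ioo_subset_Icc_self (hsub (right_mem_Icc.mpr (by linarith))))
    exact absurd hlt (not_lt.mpr this)
  · -- Λ > 0 : Wronskian comparison with v = -Φ'
    have hF := facts hR hΦ
    have hneg := phi_deriv_neg hF hΛpos
    set v : ℝ → ℝ := fun x => -(DD R Φ x) with hvdef
    set v' : ℝ → ℝ := fun x => -(DD R (DD R Φ) x) with hv'def
    have hvpos : ∀ x ∈ Ioc 0 R, 0 < v x := by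
      intro x hx
      simp only [hvdef]
      linarith [hneg x hx]
    have hv1 : ∀ r ∈ Ioo (0:ℝ) R, HasDerivAt v (v' r) r := fun r hr => (hF.hd2 r hr).neg
    have hv2 : ∀ r ∈ Ioo (0:ℝ) R, HasDerivAt v'
        (-(v' r)/r + ((1/r^2+1) - Λ * Real.exp (Φ r)) * v r) r := by
      intro r hr
      have hev : DD R (DD R Φ) =ᶠ[𝓝 r] fun x => Φ x - Λ * Real.exp (Φ x) - DD R Φ x / x :=
        eventually_of_mem (isOpen_Ioo.mem_nhds hr) (fun x hx => hF.eqn x ⟨hx.1, hx.2.le⟩)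
      have hgD : HasDerivAt (fun x => Φ x - Λ * Real.exp (Φ x) - DD R Φ x / x)
          (DD R Φ r - Λ * (Real.exp (Φ r) * DD R Φ r)
            - (DD R (DD R Φ) r * r - DD R Φ r * 1) / r^2) r := by
        refine ((hF.hd1 r hr).sub (((hF.hd1 r hr).exp).const_mul Λ)).sub ?_
        exact (hF.hd2 r hr).div (hasDerivAt_id r) (ne_of_gt hr.1)
      have hDD : HasDerivAt (DD R (DD R Φ))
          (DD R Φ r - Λ * (Real.exp (Φ r) * DD R Φ r)
            - (DD R (DD R Φ) r * r - DD R Φ r * 1) / r^2) r :=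
        hgD.congr_of_eventuallyEq hev
      have := hDD.neg
      refine this.congr_deriv ?_
      have hr0 : r ≠ 0 := ne_of_gt hr.1
      simp only [hv'def, hvdef]
      field_simp
      ring
    set W : ℝ → ℝ := fun x => x * (v x * DD R w x - w x * v' x) with hWdef
    have hWcont : ContinuousOn W (Icc 0 R) := by
      refine continuousOn_id.mul (ContinuousOn.sub ((hF.cont1.neg).mul contw')
        (contw.mul (hF.cont2.neg)))
    have hWd : ∀ r ∈ Ioo (0:ℝ) R,
        HasDerivAt W (((n:ℝ)^2 - 1)/r * (v r * w r)) r := by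
      intro r hr
      have hprod : HasDerivAt (fun x => v x * DD R w x - w x * v' x)
          ((v' r * DD R w r + v r * (-(DD R w r)/r + (((n:ℝ)^2/r^2+1)
            - Λ * Real.exp (Φ r)) * w r))
           - (DD R w r * v' r + w r * (-(v' r)/r + ((1/r^2+1)
            - Λ * Real.exp (Φ r)) * v r))) r :=
        ((hv1 r hr).mul (hwd2 r hr)).sub ((hwd1 r hr).mul (hv2 r hr))
      have := (hasDerivAt_id r).mul hprod
      refine this.congr_deriv ?_
      have hr0 : r ≠ 0 := ne_of_gt hr.1
      simp only [id]
      field_simp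
      ring
    -- the interval (a,c) around rs where w > 0
    set Z₁ : Set ℝ := Icc 0 rs ∩ w ⁻¹' {0} with hZ₁def
    have hZ₁closed : IsClosed Z₁ :=
      (contw.mono (Icc_subset_Icc le_rfl hrsIcc.2)).preimage_isClosed_of_isClosed
        isClosed_Icc isClosed_singleton
    have h0Z₁ : (0:ℝ) ∈ Z₁ := ⟨⟨le_rfl, hrsIcc.1⟩, hw0⟩
    have hZ₁bdd : BddAbove Z₁ := ⟨rs, fun x hx => hx.1.2⟩
    set a := sSup Z₁ with hadef
    have haZ : a ∈ Z₁ := hZ₁closed.csSup_mem ⟨0, h0Z₁⟩ hZ₁bdd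
    have hwa : w a = 0 := haZ.2
    have ha0 : 0 ≤ a := haZ.1.1
    have hars : a < rs := by
      rcases eq_or_lt_of_le haZ.1.2 with h | h
      · exfalso; rw [h] at hwa; linarith
      · exact h
    set Z₂ : Set ℝ := Icc rs R ∩ w ⁻¹' {0} with hZ₂def
    have hZ₂closed : IsClosed Z₂ :=
      (contw.mono (Icc_subset_Icc hrsIcc.1 le_rfl)).preimage_isClosed_of_isClosed
        isClosed_Icc isClosed_singleton
    have hRZ₂ : R ∈ Z₂ := ⟨⟨hrsIcc.2, le_rfl⟩, hwR⟩
    have hZ₂bdd : BddBelow Z₂ := ⟨rs, fun x hx => hx.1.1⟩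
    set c := sInf Z₂ with hcdef
    have hcZ : c ∈ Z₂ := hZ₂closed.csInf_mem ⟨R, hRZ₂⟩ hZ₂bdd
    have hwc : w c = 0 := hcZ.2
    have hcR : c ≤ R := hcZ.1.2
    have hrsc : rs < c := by
      rcases eq_or_lt_of_le hcZ.1.1 with h | h
      · exfalso; rw [← h] at hwc; linarith
      · exact h
    have hac : a < c := lt_trans hars hrsc
    have hc0 : 0 < c := lt_of_le_of_lt ha0 hac
    have hcIoc : c ∈ Ioc 0 R := ⟨hc0, hcR⟩
    have hIooac : Ioo a c ⊆ Ioo 0 R :=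
      fun x hx => ⟨lt_of_le_of_lt ha0 hx.1, lt_of_lt_of_le hx.2 hcR⟩
    have hIccac : Icc a c ⊆ Icc 0 R :=
      fun x hx => ⟨le_trans ha0 hx.1, le_trans hx.2 hcR⟩
    have hwpos : ∀ x ∈ Ioo a c, 0 < w x := by
      intro x hx
      by_contra hle
      push_neg at hle
      rcases lt_trichotomy x rs with hxr | hxr | hxr
      · obtain ⟨y, hy, hy0⟩ := intermediate_value_Icc hxr.le
          (contw.mono (Icc_subset_Icc (le_trans ha0 hx.1.le) hrsIcc.2)) ⟨hle, hrs.le⟩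
        have hyZ : y ∈ Z₁ := ⟨⟨le_trans (le_trans ha0 hx.1.le) hy.1, hy.2⟩, hy0⟩
        have := le_csSup hZ₁bdd hyZ
        linarith [hy.1, hx.1]
      · rw [hxr] at hle; linarith
      · obtain ⟨y, hy, hy0⟩ := intermediate_value_Icc' hxr.le
          (contw.mono (Icc_subset_Icc hrsIcc.1 (le_trans hx.2.le hcR))) ⟨hle, hrs.le⟩
        have hyZ : y ∈ Z₂ := ⟨⟨hy.1, le_trans hy.2 (le_trans hx.2.le hcR)⟩, hy0⟩
        have := csInf_le hZ₂bdd hyZ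
        linarith [hy.2, hx.2]
    have hrsmem : rs ∈ Ioo a c := ⟨hars, hrsc⟩
    -- endpoint signs of W
    have hWa : 0 ≤ W a := by
      rcases eq_or_lt_of_le ha0 with h | h
      · simp only [hWdef, ← h, zero_mul]
        exact le_rfl
      · have hDDa : 0 ≤ DD R w a :=
          slope_nonneg_right (R := R) hac (fun x hx => Ioo_subset_Icc_self (hIooac hx))
            (hwdw a (hIccac (left_mem_Icc.mpr hac.le))) hwa
            (fun x hx => (hwpos x hx).le)
        have hva : 0 < v a := hvpos a ⟨h, le_trans hac.le hcR⟩
        simp only [hWdef, hwa, zero_mul, sub_zero]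
        positivity
    have hWc : W c ≤ 0 := by
      have hDDc : DD R w c ≤ 0 :=
        slope_nonpos_left (R := R) hac (fun x hx => Ioo_subset_Icc_self (hIooac hx))
          (hwdw c (hIccac (right_mem_Icc.mpr hac.le))) hwc
          (fun x hx => (hwpos x hx).le)
      have hvc : 0 < v c := hvpos c hcIoc
      simp only [hWdef, hwc, zero_mul, sub_zero]
      have : v c * DD R w c ≤ 0 := mul_nonpos_of_nonneg_of_nonpos hvc.le hDDc
      exact mul_nonpos_of_nonneg_of_nonpos hc0.le this
    have hWmono : MonotoneOn W (Icc a c) := by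
      refine monotoneOn_of_deriv_nonneg (convex_Icc _ _) (hWcont.mono hIccac) ?_ ?_
      · rw [interior_Icc]
        intro x hx
        exact (hWd x (hIooac hx)).differentiableAt.differentiableWithinAt
      · intro x hx
        rw [interior_Icc] at hx
        rw [(hWd x (hIooac hx)).deriv]
        have hn1 : (1:ℝ) ≤ (n:ℝ) := by exact_mod_cast hn
        have h1 : 0 ≤ ((n:ℝ)^2 - 1)/x := by
          apply div_nonneg (by nlinarith) (le_of_lt (hIooac hx).1)
        have h2 : 0 ≤ v x * w x :=
          mul_nonneg (hvpos x ⟨(hIooac hx).1, (hIooac hx).2.le⟩).le (hwpos x hx).le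
        exact mul_nonneg h1 h2
    have hW0 : ∀ x ∈ Ioo a c, W x = 0 := by
      intro x hx
      have h1 := hWmono (left_mem_Icc.mpr hac.le) ⟨hx.1.le, hx.2.le⟩ hx.1.le
      have h2 := hWmono ⟨hx.1.le, hx.2.le⟩ (right_mem_Icc.mpr hac.le) hx.2.le
      linarith
    have hvw : ∀ x ∈ Ioo a c, v x * DD R w x - w x * v' x = 0 := by
      intro x hx
      have hx0 : x ≠ 0 := ne_of_gt (hIooac hx).1
      have := hW0 x hx
      simp only [hWdef] at this
      rcases mul_eq_zero.mp this with h | h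
      · exact absurd h hx0
      · exact h
    -- θ = w / v is constant on (a,c)
    have hθd : ∀ x ∈ Ioo a c, HasDerivAt (fun y => w y / v y) 0 x := by
      intro x hx
      have hvx : v x ≠ 0 := ne_of_gt (hvpos x ⟨(hIooac hx).1, (hIooac hx).2.le⟩)
      have := (hwd1 x (hIooac hx)).div (hv1 x (hIooac hx)) hvx
      refine this.congr_deriv ?_
      rw [div_eq_zero_iff]
      left
      have := hvw x hx
      linarith [this, mul_comm (DD R w x) (v x)]
    have hθconst : ∀ x ∈ Ioo a c, ∀ y ∈ Ioo a c, w x / v x = w y / v y := by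
      have key2 : ∀ x ∈ Ioo a c, ∀ y ∈ Ioo a c, x < y → w x / v x = w y / v y := by
        intro x hx y hy hxy
        obtain ⟨ξ, hξ, hs⟩ := exists_hasDerivAt_eq_slope (fun t => w t / v t)
          (fun _ => 0) hxy
          (fun z hz => (hθd z ⟨lt_of_lt_of_le hx.1 hz.1, lt_of_le_of_lt hz.2 hy.2⟩)
            |>.differentiableAt.continuousAt.continuousWithinAt)
          (fun z hz => hθd z ⟨lt_trans hx.1 hz.1, lt_trans hz.2 hy.2⟩)
        have : (w y / v y - w x / v x) / (y - x) = 0 := hs.symm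
        rcases div_eq_zero_iff.mp this with h | h
        · linarith
        · exfalso; have := sub_ne_zero.mpr (ne_of_gt hxy); exact this (by linarith)
      intro x hx y hy
      rcases lt_trichotomy x y with h | h | h
      · exact key2 x hx y hy h
      · rw [h]
      · exact (key2 y hy x hx h).symm
    have hκpos : 0 < w rs / v rs :=
      div_pos hrs (hvpos rs ⟨hrsIoo.1, hrsIoo.2.le⟩)
    haveI hneC : (𝓝[Ioo a c] c).NeBot := by
      refine mem_closure_iff_nhdsWithin_neBot.mp ?_
      rw [closure_Ioo (ne_of_lt hac)]
      exact ⟨hac.le, le_rfl⟩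
    have hcIcc : c ∈ Icc (0:ℝ) R := ⟨hc0.le, hcR⟩
    have ht1 : Tendsto (fun y => w y / v y) (𝓝[Ioo a c] c) (𝓝 (w c / v c)) := by
      refine ContinuousWithinAt.div ?_ ?_ (ne_of_gt (hvpos c hcIoc))
      · exact (contw c hcIcc).mono (fun x hx => Ioo_subset_Icc_self (hIooac hx))
      · exact ((hF.cont1.neg) c hcIcc).mono (fun x hx => Ioo_subset_Icc_self (hIooac hx))
    have ht2 : Tendsto (fun y => w y / v y) (𝓝[Ioo a c] c) (𝓝 (w rs / v rs)) := by
      refine Tendsto.congr' ?_ tendsto_const_nhds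
      filter_upwards [self_mem_nhdsWithin] with x hx
      exact hθconst rs hrsmem x hx
    have := tendsto_nhds_unique ht1 ht2
    rw [hwc, zero_div] at this
    linarith

end FMDU

open Set Filter Topology

theorem fourier_mode_dirichlet_uniqueness
    (R Λ : ℝ) (hR : 0 < R) (hΛ : 0 ≤ Λ) (Φ : ℝ → ℝ)
    (hΦ : IsRadialSteadyState R Λ Φ)
    (n : ℕ) (hn : 1 ≤ n) (b : ℝ) (h₁ h₂ : ℝ → ℝ)
    (hh₁1 : ContDiffOn ℝ 1 h₁ (Set.Icc 0 R))
    (hh₁2 : ContDiffOn ℝ 2 h₁ (Set.Ioo 0 R))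
    (hh₁eq : ∀ r ∈ Set.Ioo (0:ℝ) R,
      -(deriv (deriv h₁) r) - deriv h₁ r / r + ((n:ℝ)^2 / r^2 + 1) * h₁ r
        = Λ * Real.exp (Φ r) * h₁ r)
    (hh₁0 : h₁ 0 = 0) (hh₁R : h₁ R = b)
    (hh₂1 : ContDiffOn ℝ 1 h₂ (Set.Icc 0 R))
    (hh₂2 : ContDiffOn ℝ 2 h₂ (Set.Ioo 0 R))
    (hh₂eq : ∀ r ∈ Set.Ioo (0:ℝ) R,
      -(deriv (deriv h₂) r) - deriv h₂ r / r + ((n:ℝ)^2 / r^2 + 1) * h₂ r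
        = Λ * Real.exp (Φ r) * h₂ r)
    (hh₂0 : h₂ 0 = 0) (hh₂R : h₂ R = b) :
    ∀ r ∈ Set.Icc (0:ℝ) R, h₁ r = h₂ r := by

  -- general lemma for differences
  have main : ∀ f g : ℝ → ℝ, ContDiffOn ℝ 1 f (Set.Icc 0 R) → ContDiffOn ℝ 2 f (Set.Ioo 0 R) →
      (∀ r ∈ Set.Ioo (0:ℝ) R,
        -(deriv (deriv f) r) - deriv f r / r + ((n:ℝ)^2 / r^2 + 1) * f r
          = Λ * Real.exp (Φ r) * f r) →
      f 0 = 0 → f R = b →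
      ContDiffOn ℝ 1 g (Set.Icc 0 R) → ContDiffOn ℝ 2 g (Set.Ioo 0 R) →
      (∀ r ∈ Set.Ioo (0:ℝ) R,
        -(deriv (deriv g) r) - deriv g r / r + ((n:ℝ)^2 / r^2 + 1) * g r
          = Λ * Real.exp (Φ r) * g r) →
      g 0 = 0 → g R = b →
      ∀ r ∈ Set.Icc (0:ℝ) R, f r - g r ≤ 0 := by
    intro f g hf1 hf2 hfeq hf0 hfR hg1 hg2 hgeq hg0 hgR
    refine FMDU.key hR hΛ hΦ n hn (fun x => f x - g x) (hf1.sub hg1) (hf2.sub hg2) ?_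
      (by show f 0 - g 0 = 0; rw [hf0, hg0, sub_zero]) (by show f R - g R = 0; rw [hfR, hgR, sub_self])
    intro r hr
    have hdf : DifferentiableAt ℝ f r :=
      (hf2.differentiableOn (by norm_num)).differentiableAt (isOpen_Ioo.mem_nhds hr)
    have hdg : DifferentiableAt ℝ g r :=
      (hg2.differentiableOn (by norm_num)).differentiableAt (isOpen_Ioo.mem_nhds hr)
    have hdf' : DifferentiableAt ℝ (deriv f) r :=
      ((hf2.deriv_of_isOpen isOpen_Ioo (m := 1) (by norm_num)).differentiableOn
        one_ne_zero).differentiableAt (isOpen_Ioo.mem_nhds hr)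
    have hdg' : DifferentiableAt ℝ (deriv g) r :=
      ((hg2.deriv_of_isOpen isOpen_Ioo (m := 1) (by norm_num)).differentiableOn
        one_ne_zero).differentiableAt (isOpen_Ioo.mem_nhds hr)
    have hder : deriv (fun x => f x - g x) =ᶠ[𝓝 r] fun x => deriv f x - deriv g x := by
      filter_upwards [isOpen_Ioo.mem_nhds hr] with x hx
      exact deriv_sub ((hf2.differentiableOn (by norm_num)).differentiableAt
        (isOpen_Ioo.mem_nhds hx)) ((hg2.differentiableOn (by norm_num)).differentiableAt
        (isOpen_Ioo.mem_nhds hx))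
    have e1 : deriv (fun x => f x - g x) r = deriv f r - deriv g r := deriv_sub hdf hdg
    have e2 : deriv (deriv (fun x => f x - g x)) r = deriv (deriv f) r - deriv (deriv g) r := by
      rw [Filter.EventuallyEq.deriv_eq hder]
      exact deriv_sub hdf' hdg'
    rw [e1, e2]
    have q₁ := hfeq r hr
    have q₂ := hgeq r hr
    have hr0 : r ≠ 0 := ne_of_gt hr.1
    field_simp at q₁ q₂ ⊢
    ring_nf at q₁ q₂ ⊢
    linarith
  intro r hr
  have k₁ := main h₁ h₂ hh₁1 hh₁2 hh₁eq hh₁0 hh₁R hh₂1 hh₂2 hh₂eq hh₂0 hh₂R r hr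
  have k₂ := main h₂ h₁ hh₂1 hh₂2 hh₂eq hh₂0 hh₂R hh₁1 hh₁2 hh₁eq hh₁0 hh₁R r hr
  linarith
end

section
/- Let R > 0 and let Φ be a pointwise minimal radial steady state with parameters (R, 1/e). Let w : ℝ → ℝ be continuously differentiable on [0, R], twice continuously differentiable on (0, R), and satisfy the linear equation −w''(r) − w'(r)/r + w(r) = (w(r) + 1)/e for every r ∈ (0, R), with w'(0) = 0 and w(R) = 0. Then Φ(r) ≥ w(r) for every r ∈ [0, R]. -/
/-- `Φ` is a pointwise minimal radial steady state with parameters `(R, Λ)`. -/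
def IsMinimalRadialSteadyState (R Λ : ℝ) (Φ : ℝ → ℝ) : Prop :=
  IsRadialSteadyState R Λ Φ ∧
  ∀ Ψ : ℝ → ℝ, IsRadialSteadyState R Λ Ψ → ∀ r ∈ Set.Icc (0:ℝ) R, Φ r ≤ Ψ r

open Set Filter Topology

theorem minimal_solution_dominates_subsolution
    (R : ℝ) (hR : 0 < R) (Φ : ℝ → ℝ)
    (hΦ : IsMinimalRadialSteadyState R (Real.exp 1)⁻¹ Φ)
    (w : ℝ → ℝ)
    (hw1 : ContDiffOn ℝ 1 w (Set.Icc 0 R))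
    (hw2 : ContDiffOn ℝ 2 w (Set.Ioo 0 R))
    (hweq : ∀ r ∈ Set.Ioo (0:ℝ) R,
      -(deriv (deriv w) r) - deriv w r / r + w r = (w r + 1) / Real.exp 1)
    (hw0 : deriv w 0 = 0) (hwR : w R = 0) :
    ∀ r ∈ Set.Icc (0:ℝ) R, w r ≤ Φ r := by
  obtain ⟨⟨hΦsm, hΦeq, hΦ'0, hΦR⟩, -⟩ := hΦ
  set u : ℝ → ℝ := fun r => w r - Φ r with hu_def
  set E : ℝ := (Real.exp 1)⁻¹ with hE
  have hepos : (0:ℝ) < Real.exp 1 := Real.exp_pos 1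
  have he1 : (1:ℝ) < Real.exp 1 := by
    have := Real.add_one_le_exp 1; linarith
  have hEpos : 0 < E := by positivity
  have hE1 : E < 1 := by
    rw [hE, inv_lt_one_iff₀]; right; exact he1
  -- regularity
  have huD : UniqueDiffOn ℝ (Set.Icc 0 R) := uniqueDiffOn_Icc hR
  have hΦc : ContinuousOn Φ (Set.Icc 0 R) := hΦsm.continuousOn
  have hwc : ContinuousOn w (Set.Icc 0 R) := hw1.continuousOn
  have huc : ContinuousOn u (Set.Icc 0 R) := hwc.sub hΦc
  have hOpen : IsOpen (Set.Ioo (0:ℝ) R) := isOpen_Ioo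
  have hΦsm' : ContDiffOn ℝ 2 Φ (Set.Ioo 0 R) := hΦsm.mono Set.Ioo_subset_Icc_self
  have hΦd1 : ContDiffOn ℝ 1 (deriv Φ) (Set.Ioo 0 R) :=
    hΦsm'.deriv_of_isOpen hOpen (by norm_num)
  have hwd1 : ContDiffOn ℝ 1 (deriv w) (Set.Ioo 0 R) :=
    hw2.deriv_of_isOpen hOpen (by norm_num)
  have hΦdiff : ∀ r ∈ Set.Ioo (0:ℝ) R, DifferentiableAt ℝ Φ r := fun r hr =>
    ((hΦsm'.differentiableOn (by norm_num)).differentiableAt (hOpen.mem_nhds hr))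
  have hwdiff : ∀ r ∈ Set.Ioo (0:ℝ) R, DifferentiableAt ℝ w r := fun r hr =>
    ((hw2.differentiableOn (by norm_num)).differentiableAt (hOpen.mem_nhds hr))
  have hΦd1diff : ∀ r ∈ Set.Ioo (0:ℝ) R, DifferentiableAt ℝ (deriv Φ) r := fun r hr =>
    ((hΦd1.differentiableOn (by norm_num)).differentiableAt (hOpen.mem_nhds hr))
  have hwd1diff : ∀ r ∈ Set.Ioo (0:ℝ) R, DifferentiableAt ℝ (deriv w) r := fun r hr =>
    ((hwd1.differentiableOn (by norm_num)).differentiableAt (hOpen.mem_nhds hr))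
  have hud : ∀ r ∈ Set.Ioo (0:ℝ) R, HasDerivAt u (deriv w r - deriv Φ r) r := fun r hr =>
    ((hwdiff r hr).hasDerivAt.sub (hΦdiff r hr).hasDerivAt)
  have hud' : ∀ r ∈ Set.Ioo (0:ℝ) R, deriv u r = deriv w r - deriv Φ r := fun r hr =>
    (hud r hr).deriv
  have hudd : ∀ r ∈ Set.Ioo (0:ℝ) R,
      HasDerivAt (deriv u) (deriv (deriv w) r - deriv (deriv Φ) r) r := by
    intro r hr
    have h1 : HasDerivAt (fun s => deriv w s - deriv Φ s)
        (deriv (deriv w) r - deriv (deriv Φ) r) r :=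
      ((hwd1diff r hr).hasDerivAt.sub (hΦd1diff r hr).hasDerivAt)
    refine h1.congr_of_eventuallyEq ?_
    filter_upwards [hOpen.mem_nhds hr] with s hs
    exact hud' s hs
  -- the key differential inequality for g s = s * deriv u s
  have hkey : ∀ r ∈ Set.Ioo (0:ℝ) R,
      (1 - E) * r * u r ≤ deriv u r + r * (deriv (deriv w) r - deriv (deriv Φ) r) := by
    intro r hr
    have hwe := hweq r hr
    have hΦe := hΦeq r hr
    have hexp : Φ r + 1 ≤ Real.exp (Φ r) := Real.add_one_le_exp (Φ r)
    have hr0 : (0:ℝ) < r := hr.1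
    rw [hud' r hr]
    have h1 : r * E * (Φ r + 1) ≤ r * E * Real.exp (Φ r) :=
      mul_le_mul_of_nonneg_left hexp (by positivity)
    have hEe : Real.exp 1 * E = 1 := mul_inv_cancel₀ hepos.ne'
    have hwr : r * deriv (deriv w) r = r * w r - deriv w r - r * E * (w r + 1) := by
      have hmul := congrArg (fun x => x * r) hwe
      field_simp at hmul
      have h2 := congrArg (fun x => x * E) hmul
      rw [mul_assoc, hEe, mul_one] at h2
      linarith [h2]
    have hΦr : r * deriv (deriv Φ) r = r * Φ r - deriv Φ r - r * E * Real.exp (Φ r) := by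
      have hmul := congrArg (fun x => x * r) hΦe
      field_simp at hmul
      linarith [hmul]
    have hur : u r = w r - Φ r := rfl
    rw [hur]
    linarith [hwr, hΦr, h1]
  -- main argument by contradiction
  by_contra hcon
  push_neg at hcon
  obtain ⟨rb, hrb, hrbgt⟩ := hcon
  obtain ⟨r0, hr0mem, hr0max⟩ :=
    (isCompact_Icc (a := (0:ℝ)) (b := R)).exists_isMaxOn
      ⟨0, by constructor <;> linarith⟩ huc
  have hM : 0 < u r0 := by
    have h1 : 0 < u rb := by simp only [hu_def]; linarith
    exact lt_of_lt_of_le h1 (hr0max hrb)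
  have huR : u R = 0 := by simp [hu_def, hwR, hΦR]
  have hr0R : r0 < R := by
    rcases lt_or_eq_of_le hr0mem.2 with h | h
    · exact h
    · rw [h] at hM; rw [huR] at hM; linarith
  have hr00 : 0 ≤ r0 := hr0mem.1
  -- find δ where u > 0
  have hevent : ∀ᶠ s in 𝓝[Set.Icc 0 R] r0, 0 < u s :=
    (huc r0 hr0mem).eventually (eventually_gt_nhds hM)
  obtain ⟨δ, hδpos, hδ⟩ := Metric.mem_nhdsWithin_iff.mp hevent
  set b : ℝ := min (r0 + δ) R with hb_def
  have hb1 : r0 < b := lt_min (by linarith) hr0R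
  have hb2 : b ≤ R := min_le_right _ _
  have hmemIoo : ∀ s ∈ Set.Ioo r0 b, s ∈ Set.Ioo (0:ℝ) R := by
    intro s hs
    exact ⟨lt_of_le_of_lt hr00 hs.1, lt_of_lt_of_le hs.2 hb2⟩
  have hposu : ∀ s ∈ Set.Ioo r0 b, 0 < u s := by
    intro s hs
    apply hδ
    constructor
    · rw [Metric.mem_ball, Real.dist_eq, abs_of_nonneg (by linarith [hs.1])]
      have : s < r0 + δ := lt_of_lt_of_le hs.2 (min_le_left _ _)
      linarith
    · have := hmemIoo s hs; exact ⟨le_of_lt this.1, le_of_lt this.2⟩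
  set g : ℝ → ℝ := fun s => s * deriv u s with hg_def
  -- continuity of deriv u on Ioo
  have hduc : ContinuousOn (deriv u) (Set.Ioo 0 R) := by
    have h1 : ContinuousOn (fun s => deriv w s - deriv Φ s) (Set.Ioo 0 R) :=
      (hwd1.continuousOn).sub (hΦd1.continuousOn)
    exact h1.congr hud'
  -- tendsto of g at r0 from the right
  have htend : Tendsto g (𝓝[>] r0) (𝓝 0) := by
    rcases eq_or_lt_of_le hr00 with h0 | h0
    · -- r0 = 0 : use derivWithin continuity
      subst h0
      have hDw : ContinuousOn (derivWithin w (Set.Icc 0 R)) (Set.Icc 0 R) :=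
        hw1.continuousOn_derivWithin huD le_rfl
      have hDΦ : ContinuousOn (derivWithin Φ (Set.Icc 0 R)) (Set.Icc 0 R) :=
        hΦsm.continuousOn_derivWithin huD (by norm_num)
      have hG : Tendsto (fun s => s * (derivWithin w (Set.Icc 0 R) s -
          derivWithin Φ (Set.Icc 0 R) s)) (𝓝[Set.Icc 0 R] 0)
          (𝓝 (0 * (derivWithin w (Set.Icc 0 R) 0 - derivWithin Φ (Set.Icc 0 R) 0))) := by
        exact (continuousWithinAt_id.mul ((hDw 0 (by constructor <;> linarith)).sub
          (hDΦ 0 (by constructor <;> linarith))))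
      rw [zero_mul] at hG
      have hle1 : 𝓝[>] (0:ℝ) ≤ 𝓝[Set.Ioo (0:ℝ) R] 0 := by
        apply nhdsWithin_le_of_mem
        rw [mem_nhdsWithin_iff_exists_mem_nhds_inter]
        exact ⟨Set.Iio R, Iio_mem_nhds hR, by
          intro x hx; exact ⟨hx.2, hx.1⟩⟩
      have hle2 : 𝓝[Set.Ioo (0:ℝ) R] 0 ≤ 𝓝[Set.Icc 0 R] 0 :=
        nhdsWithin_mono _ Set.Ioo_subset_Icc_self
      have hG' : Tendsto (fun s => s * (derivWithin w (Set.Icc 0 R) s -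
          derivWithin Φ (Set.Icc 0 R) s)) (𝓝[Set.Ioo (0:ℝ) R] 0) (𝓝 0) := hG.mono_left hle2
      have heq : ∀ s ∈ Set.Ioo (0:ℝ) R, g s = s * (derivWithin w (Set.Icc 0 R) s -
          derivWithin Φ (Set.Icc 0 R) s) := by
        intro s hs
        have hnh : Set.Icc (0:ℝ) R ∈ 𝓝 s := by
          apply mem_nhds_iff.mpr
          exact ⟨Set.Ioo 0 R, Set.Ioo_subset_Icc_self, hOpen, hs⟩
        rw [hg_def]
        simp only
        rw [derivWithin_of_mem_nhds hnh, derivWithin_of_mem_nhds hnh, hud' s hs]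
      have : Tendsto g (𝓝[Set.Ioo (0:ℝ) R] 0) (𝓝 0) := by
        refine hG'.congr' ?_
        filter_upwards [self_mem_nhdsWithin] with s hs
        exact (heq s hs).symm
      exact this.mono_left hle1
    · -- r0 > 0 : deriv u is continuous at r0 and deriv u r0 = 0
      have hr0Ioo : r0 ∈ Set.Ioo (0:ℝ) R := ⟨h0, hr0R⟩
      have hloc : IsLocalMax u r0 := hr0max.isLocalMax (Icc_mem_nhds h0 hr0R)
      have hd0 : deriv u r0 = 0 := hloc.deriv_eq_zero
      have hgc : ContinuousAt g r0 := by
        have h1 : ContinuousAt (deriv u) r0 :=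
          (hduc.continuousAt (hOpen.mem_nhds hr0Ioo))
        exact continuousAt_id.mul h1
      have : Tendsto g (𝓝 r0) (𝓝 (g r0)) := hgc.tendsto
      have hg0 : g r0 = 0 := by rw [hg_def]; simp [hd0]
      rw [hg0] at this
      exact this.mono_left nhdsWithin_le_nhds
  -- g has positive derivative on (r0, b)
  have hgd : ∀ s ∈ Set.Ioo r0 b, HasDerivAt g
      (deriv u s + s * (deriv (deriv w) s - deriv (deriv Φ) s)) s := by
    intro s hs
    have hs' := hmemIoo s hs
    have h1 : HasDerivAt (fun t => t * deriv u t)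
        (1 * deriv u s + s * (deriv (deriv w) s - deriv (deriv Φ) s)) s :=
      (hasDerivAt_id s).mul (hudd s hs')
    rw [one_mul] at h1
    exact h1
  have hgderiv : ∀ s ∈ Set.Ioo r0 b, deriv g s =
      deriv u s + s * (deriv (deriv w) s - deriv (deriv Φ) s) := fun s hs => (hgd s hs).deriv
  have hgpos : ∀ s ∈ Set.Ioo r0 b, 0 < deriv g s := by
    intro s hs
    have hs' := hmemIoo s hs
    rw [hgderiv s hs]
    have h1 := hkey s hs'
    have h2 : 0 < (1 - E) * s * u s := by
      apply mul_pos (mul_pos (by linarith) hs'.1) (hposu s hs)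
    linarith
  have hgcont : ContinuousOn g (Set.Ioo r0 b) := by
    intro s hs
    exact ((hgd s hs).continuousAt).continuousWithinAt
  have hgmono : StrictMonoOn g (Set.Ioo r0 b) := by
    apply strictMonoOn_of_deriv_pos (convex_Ioo r0 b) hgcont
    rw [interior_Ioo]
    exact hgpos
  -- g ≥ 0 on (r0, b)
  have hgnn : ∀ s ∈ Set.Ioo r0 b, 0 ≤ g s := by
    intro s hs
    refine le_of_tendsto htend ?_
    filter_upwards [Ioo_mem_nhdsGT_of_mem (show r0 ∈ Set.Ico r0 s from ⟨le_refl _, hs.1⟩)]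
      with t ht
    exact (hgmono ⟨ht.1, ht.2.trans hs.2⟩ hs ht.2).le
  have hdnn : ∀ s ∈ Set.Ioo r0 b, 0 ≤ deriv u s := by
    intro s hs
    have h1 := hgnn s hs
    have h2 : 0 < s := (hmemIoo s hs).1
    rw [hg_def] at h1
    simp only at h1
    nlinarith
  -- u is monotone on [r0, b)
  have humono : MonotoneOn u (Set.Ico r0 b) := by
    apply monotoneOn_of_deriv_nonneg (convex_Ico r0 b)
    · apply huc.mono
      intro s hs
      exact ⟨le_trans hr00 hs.1, le_trans (le_of_lt hs.2) hb2⟩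
    · rw [interior_Ico]
      intro s hs
      exact ((hud s (hmemIoo s hs)).differentiableAt).differentiableWithinAt
    · rw [interior_Ico]
      exact hdnn
  -- pick points r1 < r2 in (r0, b)
  set r1 : ℝ := (r0 + b) / 2 with hr1_def
  set r2 : ℝ := (r1 + b) / 2 with hr2_def
  have hr1mem : r1 ∈ Set.Ioo r0 b := ⟨by rw [hr1_def]; linarith, by rw [hr1_def]; linarith⟩
  have hr2mem : r2 ∈ Set.Ioo r0 b :=
    ⟨by rw [hr2_def]; nlinarith [hr1mem.1, hr1mem.2], by rw [hr2_def]; linarith [hr1mem.2]⟩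
  have hr12 : r1 < r2 := by rw [hr2_def]; linarith [hr1mem.2]
  have hstep1 : u r0 ≤ u r1 :=
    humono ⟨le_refl _, hb1⟩ ⟨le_of_lt hr1mem.1, hr1mem.2⟩ (le_of_lt hr1mem.1)
  -- u strictly increasing on [r1, r2]
  have hstrict : StrictMonoOn u (Set.Icc r1 r2) := by
    apply strictMonoOn_of_deriv_pos (convex_Icc r1 r2)
    · apply huc.mono
      intro s hs
      constructor
      · linarith [hs.1, hr1mem.1, hr00]
      · linarith [hs.2, hr2mem.2, hb2]
    · rw [interior_Icc]
      intro s hs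
      have hsmem : s ∈ Set.Ioo r0 b := ⟨hr1mem.1.trans hs.1, hs.2.trans hr2mem.2⟩
      have h1 : g r1 < g s := hgmono hr1mem hsmem hs.1
      have h2 : 0 ≤ g r1 := hgnn r1 hr1mem
      have h3 : 0 < s := (hmemIoo s hsmem).1
      have h4 : 0 < g s := lt_of_le_of_lt h2 h1
      rw [hg_def] at h4
      simp only at h4
      nlinarith
  have hfinal : u r1 < u r2 := hstrict ⟨le_refl _, le_of_lt hr12⟩
    ⟨le_of_lt hr12, le_refl _⟩ hr12
  have hr2Icc : r2 ∈ Set.Icc (0:ℝ) R := by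
    have := hmemIoo r2 hr2mem
    exact ⟨le_of_lt this.1, le_of_lt this.2⟩
  have := hr0max hr2Icc
  simp only [Set.mem_setOf_eq] at this
  linarith
end

section
/- Let R > 0 and let w : ℝ → ℝ be continuously differentiable on [0, R], twice continuously differentiable on (0, R), and satisfy −w''(r) − w'(r)/r + w(r) = (w(r) + 1)/e for every r ∈ (0, R), with w'(0) = 0 and w(R) = 0. Then w(r) > 0 for every r ∈ [0, R). -/
open Set

theorem auxiliary_subsolution_positive
    (R : ℝ) (hR : 0 < R) (w : ℝ → ℝ)
    (hw1 : ContDiffOn ℝ 1 w (Set.Icc 0 R))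
    (hw2 : ContDiffOn ℝ 2 w (Set.Ioo 0 R))
    (hweq : ∀ r ∈ Set.Ioo (0:ℝ) R,
      -(deriv (deriv w) r) - deriv w r / r + w r = (w r + 1) / Real.exp 1)
    (hw0 : deriv w 0 = 0) (hwR : w R = 0) :
    ∀ r ∈ Set.Ico (0:ℝ) R, 0 < w r := by
  by_contra hcon
  push_neg at hcon
  obtain ⟨r, hrmem, hrle⟩ := hcon
  set E := Real.exp 1 with hEdef
  have hE1 : 1 < E := by
    have := Real.exp_one_gt_d9; rw [hEdef]; linarith
  have hE0 : 0 < E := by linarith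
  have hwc : ContinuousOn w (Icc 0 R) := hw1.continuousOn
  obtain ⟨q, hqmem, hqmin⟩ :=
    (isCompact_Icc).exists_isMinOn (nonempty_Icc.mpr hR.le) hwc
  have hrIcc : r ∈ Icc 0 R := ⟨hrmem.1, hrmem.2.le⟩
  obtain ⟨p, hpIco, hpmin⟩ : ∃ p ∈ Ico (0:ℝ) R, IsMinOn w (Icc 0 R) p := by
    rcases eq_or_ne q R with hqR | hqR
    · refine ⟨r, hrmem, fun x hx => ?_⟩
      have h1 := hqmin hrIcc
      have h2 := hqmin hx
      simp only [hqR, hwR, Set.mem_setOf_eq] at h1 h2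
      simp only [Set.mem_setOf_eq]
      linarith [le_antisymm hrle h1]
    · exact ⟨q, ⟨hqmem.1, lt_of_le_of_ne hqmem.2 hqR⟩, hqmin⟩
  have hpIcc : p ∈ Icc 0 R := ⟨hpIco.1, hpIco.2.le⟩
  have hm0 : w p ≤ 0 := le_trans (hpmin hrIcc) hrle
  -- derivative vanishes at the minimum point
  have hdp : deriv w p = 0 := by
    rcases eq_or_lt_of_le hpIco.1 with h0 | h0
    · rw [← h0]; exact hw0
    · have hpIoo : p ∈ Ioo 0 R := ⟨h0, hpIco.2⟩
      have hloc : IsLocalMin w p :=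
        hpmin.isLocalMin (Icc_mem_nhds (by linarith) hpIco.2)
      exact hloc.deriv_eq_zero
  -- derivWithin, continuous up to the boundary
  set g := derivWithin w (Icc 0 R) with hgdef
  have hgcont : ContinuousOn g (Icc 0 R) :=
    hw1.continuousOn_derivWithin (uniqueDiffOn_Icc hR) le_rfl
  have hgeq : ∀ x ∈ Ioo (0:ℝ) R, g x = deriv w x := by
    intro x hx
    exact derivWithin_of_mem_nhds (Icc_mem_nhds hx.1 hx.2)
  -- find r₁ > p with w < w p + 1/E on [p, r₁]
  have hcontp : ContinuousWithinAt w (Icc 0 R) p := hwc p hpIcc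
  have hev : w ⁻¹' Iio (w p + 1/E) ∈ nhdsWithin p (Icc 0 R) := by
    apply hcontp
    apply Iio_mem_nhds
    have : (0:ℝ) < 1/E := by positivity
    linarith
  obtain ⟨ε, hε, hball⟩ := Metric.mem_nhdsWithin_iff.mp hev
  set r₁ := min (p + ε/2) ((p+R)/2) with hr₁def
  have hpr₁ : p < r₁ := by
    apply lt_min (by linarith)
    linarith [hpIco.2]
  have hr₁R : r₁ < R := lt_of_le_of_lt (min_le_right _ _) (by linarith [hpIco.2])
  have hsub : Icc p r₁ ⊆ Icc 0 R := fun s hs => ⟨le_trans hpIco.1 hs.1, le_trans hs.2 hr₁R.le⟩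
  have hwlt : ∀ s ∈ Icc p r₁, w s < w p + 1/E := by
    intro s hs
    have hmem : s ∈ Metric.ball p ε ∩ Icc 0 R := by
      constructor
      · rw [Metric.mem_ball, Real.dist_eq, abs_lt]
        have h1 : s ≤ p + ε/2 := le_trans hs.2 (min_le_left _ _)
        constructor <;> [linarith [hs.1]; linarith]
      · exact hsub hs
    exact hball hmem
  -- the function h s = s * g s
  set h : ℝ → ℝ := fun s => s * g s with hhdef
  have hhcont : ContinuousOn h (Icc p r₁) :=
    continuousOn_id.mul (hgcont.mono hsub)
  have hderiv_neg : ∀ x ∈ Ioo p r₁, deriv h x < 0 := by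
    intro x hx
    have hxIoo : x ∈ Ioo (0:ℝ) R := ⟨lt_of_le_of_lt hpIco.1 hx.1, lt_trans hx.2 hr₁R⟩
    have heqf : h =ᶠ[nhds x] fun s => s * deriv w s := by
      filter_upwards [isOpen_Ioo.mem_nhds hxIoo] with s hs
      simp only [hhdef, hgeq s hs]
    have hd2 : HasDerivAt (deriv w) (deriv (deriv w) x) x := by
      have hdiff : DifferentiableOn ℝ (deriv w) (Ioo 0 R) :=
        (hw2.deriv_of_isOpen isOpen_Ioo (by norm_num : (1:WithTop ℕ∞) + 1 ≤ 2)).differentiableOn one_ne_zero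
      exact (hdiff.differentiableAt (isOpen_Ioo.mem_nhds hxIoo)).hasDerivAt
    have hder : HasDerivAt (fun s => s * deriv w s)
        (1 * deriv w x + x * deriv (deriv w) x) x :=
      (hasDerivAt_id x).mul hd2
    rw [heqf.deriv_eq, hder.deriv]
    have heqn := hweq x hxIoo
    have hx0 : (0:ℝ) < x := hxIoo.1
    have hwx : w x < w p + 1/E := hwlt x ⟨hx.1.le, hx.2.le⟩
    have hkey : 1 * deriv w x + x * deriv (deriv w) x = x * (w x - (w x + 1)/E) := by
      field_simp at heqn ⊢
      nlinarith [heqn]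
    rw [hkey]
    apply mul_neg_of_pos_of_neg hx0
    have hwx' : w x < 1/E := by linarith
    have hprod : (0:ℝ) < (1/E - w x) * (E - 1) :=
      mul_pos (by linarith) (by linarith)
    have hEE : (1/E) * E = 1 := by field_simp
    have hEpos : (0:ℝ) < 1/E := by positivity
    rw [sub_neg, lt_div_iff₀ hE0]
    nlinarith [hprod, hEE, hEpos]
  have hanti : StrictAntiOn h (Icc p r₁) :=
    strictAntiOn_of_deriv_neg (convex_Icc p r₁) hhcont
      (by rwa [interior_Icc])
  have hderivw_neg : ∀ x ∈ Ioo p r₁, deriv w x < 0 := by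
    intro x hx
    have hx0 : (0:ℝ) < x := lt_of_le_of_lt hpIco.1 hx.1
    have hxIoo : x ∈ Ioo (0:ℝ) R := ⟨hx0, lt_trans hx.2 hr₁R⟩
    have h1 : h x < h p :=
      hanti ⟨le_refl p, hpr₁.le⟩ ⟨hx.1.le, hx.2.le⟩ hx.1
    have hp0 : h p = 0 := by
      rcases eq_or_lt_of_le hpIco.1 with h0 | h0
      · simp [hhdef, ← h0]
      · have : g p = deriv w p := hgeq p ⟨h0, hpIco.2⟩
        simp [hhdef, this, hdp]
    rw [hp0] at h1
    have hxd : x * deriv w x < 0 := by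
      have h2 : x * g x < 0 := h1
      rwa [hgeq x hxIoo] at h2
    nlinarith [hxd, hx0]
  have hwanti : StrictAntiOn w (Icc p r₁) := by
    apply strictAntiOn_of_deriv_neg (convex_Icc p r₁) (hwc.mono hsub)
    rw [interior_Icc]
    exact hderivw_neg
  have hlt : w r₁ < w p := hwanti ⟨le_refl p, hpr₁.le⟩ ⟨hpr₁.le, le_refl r₁⟩ hpr₁
  have hge : w p ≤ w r₁ := hpmin (hsub ⟨hpr₁.le, le_refl r₁⟩)
  linarith
end

section
/- Let R > 0 and let g : ℝ → ℝ be continuously differentiable on [0, R], twice continuously differentiable on (0, R), and satisfy −g''(r) − g'(r)/r + g(r) = 1 for every r ∈ (0, R), with g'(0) = 0 and g(R) = 0. Then 0 < g(r) < 1 for every r ∈ [0, R). -/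
open Set

theorem leading_order_profile_bounds
    (R : ℝ) (hR : 0 < R) (g : ℝ → ℝ)
    (hg1 : ContDiffOn ℝ 1 g (Set.Icc 0 R))
    (hg2 : ContDiffOn ℝ 2 g (Set.Ioo 0 R))
    (hgeq : ∀ r ∈ Set.Ioo (0:ℝ) R,
      -(deriv (deriv g) r) - deriv g r / r + g r = 1)
    (hg0 : deriv g 0 = 0) (hgR : g R = 0) :
    ∀ r ∈ Set.Ico (0:ℝ) R, 0 < g r ∧ g r < 1 := by
  have hIccU : UniqueDiffOn ℝ (Set.Icc (0:ℝ) R) := uniqueDiffOn_Icc hR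
  set G : ℝ → ℝ := derivWithin g (Set.Icc 0 R) with hGdef
  have hgc : ContinuousOn g (Set.Icc 0 R) := hg1.continuousOn
  have hGc : ContinuousOn G (Set.Icc 0 R) := hg1.continuousOn_derivWithin hIccU le_rfl
  have hgd : ∀ r ∈ Set.Ioo (0:ℝ) R, DifferentiableAt ℝ g r := by
    intro r hr
    exact (hg2.contDiffAt (isOpen_Ioo.mem_nhds hr)).differentiableAt (by norm_num)
  have hGd : ∀ r ∈ Set.Ioo (0:ℝ) R, G r = deriv g r := by
    intro r hr
    exact (hgd r hr).derivWithin (hIccU _ (Set.Ioo_subset_Icc_self hr))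
  have hg'd : ∀ r ∈ Set.Ioo (0:ℝ) R, DifferentiableAt ℝ (deriv g) r := by
    intro r hr
    have h1 : ContDiffOn ℝ 1 (deriv g) (Set.Ioo 0 R) :=
      hg2.deriv_of_isOpen isOpen_Ioo (by norm_num)
    exact (h1.contDiffAt (isOpen_Ioo.mem_nhds hr)).differentiableAt (by norm_num)
  set h : ℝ → ℝ := fun r => r * G r with hhdef
  have hhc : ContinuousOn h (Set.Icc 0 R) := continuousOn_id.mul hGc
  have hhd : ∀ r ∈ Set.Ioo (0:ℝ) R, HasDerivAt h (r * (g r - 1)) r := by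
    intro r hr
    have e2 : HasDerivAt (deriv g) (deriv (deriv g) r) r := (hg'd r hr).hasDerivAt
    have e1 : HasDerivAt (fun s => s * deriv g s)
        (1 * deriv g r + r * deriv (deriv g) r) r := (hasDerivAt_id r).mul e2
    have heq : h =ᶠ[nhds r] fun s => s * deriv g s := by
      filter_upwards [isOpen_Ioo.mem_nhds hr] with s hs
      simp [hhdef, hGd s hs]
    have e3 : HasDerivAt h (1 * deriv g r + r * deriv (deriv g) r) r :=
      e1.congr_of_eventuallyEq heq
    have hval : 1 * deriv g r + r * deriv (deriv g) r = r * (g r - 1) := by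
      have he := hgeq r hr
      have hr0 : r ≠ 0 := ne_of_gt hr.1
      field_simp at he
      nlinarith [he]
    rwa [hval] at e3
  have key1 : ∀ r ∈ Set.Ico (0:ℝ) R, g r < 1 := by
    by_contra hcon
    push_neg at hcon
    obtain ⟨r0, hr0, hr0g⟩ := hcon
    obtain ⟨r2, hr2mem, hr2max⟩ := isCompact_Icc.exists_isMaxOn (Set.nonempty_Icc.mpr hR.le) hgc
    set M := g r2 with hMdef
    have hM1 : 1 ≤ M := le_trans hr0g (hr2max ⟨hr0.1, hr0.2.le⟩)
    set T := Set.Icc 0 R ∩ g ⁻¹' {M} with hTdef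
    have hTclosed : IsClosed T :=
      hgc.preimage_isClosed_of_isClosed isClosed_Icc isClosed_singleton
    have hTcomp : IsCompact T := isCompact_Icc.of_isClosed_subset hTclosed Set.inter_subset_left
    have hTne : T.Nonempty := ⟨r2, hr2mem, rfl⟩
    set r1 := sSup T with hr1def
    have hr1T : r1 ∈ T := hTclosed.csSup_mem hTne hTcomp.bddAbove
    have hr1mem : r1 ∈ Set.Icc 0 R := hr1T.1
    have hgr1 : g r1 = M := hr1T.2
    have hr1R : r1 < R := lt_of_le_of_ne hr1mem.2 (by
      intro he; rw [he, hgR] at hgr1; linarith)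
    have hmax1 : ∀ x ∈ Set.Icc 0 R, g x ≤ g r1 := fun x hx => (hr2max hx).trans hgr1.symm.le
    have hhr1 : h r1 = 0 := by
      rcases eq_or_lt_of_le hr1mem.1 with h0 | h0
      · simp [hhdef, ← h0]
      · have hr1Ioo : r1 ∈ Set.Ioo (0:ℝ) R := ⟨h0, hr1R⟩
        have hloc : IsLocalMax g r1 :=
          IsMaxOn.isLocalMax (fun x hx => hmax1 x hx) (Icc_mem_nhds h0 hr1R)
        simp [hhdef, hGd r1 hr1Ioo, hloc.deriv_eq_zero]
    rcases lt_or_ge 1 M with hM | hM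
    · -- case M > 1
      set C := Set.Icc r1 R ∩ g ⁻¹' Set.Iic 1 with hCdef
      have hCclosed : IsClosed C :=
        (hgc.mono (Set.Icc_subset_Icc hr1mem.1 le_rfl)).preimage_isClosed_of_isClosed
          isClosed_Icc isClosed_Iic
      have hCcomp : IsCompact C := isCompact_Icc.of_isClosed_subset hCclosed Set.inter_subset_left
      have hCne : C.Nonempty := ⟨R, ⟨hr1mem.2, le_rfl⟩, by simp [hgR]⟩
      set c := sInf C with hcdef
      have hcC : c ∈ C := hCclosed.csInf_mem hCne hCcomp.bddBelow
      have hcmem : c ∈ Set.Icc r1 R := hcC.1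
      have hc1 : g c ≤ 1 := hcC.2
      have hr1c : r1 < c := lt_of_le_of_ne hcmem.1 (by
        intro he; rw [← he, hgr1] at hc1; linarith)
      have hsub : Set.Ioo r1 c ⊆ Set.Ioo 0 R := fun x hx =>
        ⟨lt_of_le_of_lt hr1mem.1 hx.1, lt_of_lt_of_le hx.2 hcmem.2⟩
      have hge1 : ∀ x ∈ Set.Ioo r1 c, 1 ≤ g x := by
        intro x hx
        by_contra hle
        push_neg at hle
        have : c ≤ x := csInf_le hCcomp.bddBelow
          ⟨⟨hx.1.le, le_trans hx.2.le hcmem.2⟩, hle.le⟩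
        linarith [hx.2]
      have hmonoh : MonotoneOn h (Set.Icc r1 c) := by
        apply monotoneOn_of_deriv_nonneg (convex_Icc r1 c)
          (hhc.mono (Set.Icc_subset_Icc hr1mem.1 (le_trans hcmem.2 le_rfl)))
        · intro x hx
          rw [interior_Icc] at hx
          exact (hhd x (hsub hx)).differentiableAt.differentiableWithinAt
        · intro x hx
          rw [interior_Icc] at hx
          rw [(hhd x (hsub hx)).deriv]
          have h1 := hge1 x hx
          have h2 : (0:ℝ) < x := (hsub hx).1
          nlinarith
      have hg'0 : ∀ x ∈ Set.Ioo r1 c, 0 ≤ deriv g x := by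
        intro x hx
        have hhx : 0 ≤ h x := by
          have := hmonoh ⟨le_rfl, hr1c.le⟩ ⟨hx.1.le, hx.2.le⟩ hx.1.le
          rw [hhr1] at this
          exact this
        have hx' := hsub hx
        have hhx' : h x = x * deriv g x := by simp [hhdef, hGd x hx']
        rw [hhx'] at hhx
        by_contra hneg
        push_neg at hneg
        nlinarith [hx'.1]
      have hmonog : MonotoneOn g (Set.Icc r1 c) := by
        apply monotoneOn_of_deriv_nonneg (convex_Icc r1 c)
          (hgc.mono (Set.Icc_subset_Icc hr1mem.1 hcmem.2))
        · intro x hx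
          rw [interior_Icc] at hx
          exact (hgd x (hsub hx)).differentiableWithinAt
        · intro x hx
          rw [interior_Icc] at hx
          exact hg'0 x hx
      have := hmonog ⟨le_rfl, hr1c.le⟩ ⟨hr1c.le, le_rfl⟩ hr1c.le
      rw [hgr1] at this
      linarith
    · -- case M = 1
      have hgle : ∀ x ∈ Set.Icc 0 R, g x ≤ 1 := fun x hx => (hmax1 x hx).trans (hgr1 ▸ hM)
      have hgr1' : g r1 = 1 := le_antisymm (hgle r1 hr1mem) (hgr1 ▸ hM1)
      have hsub : Set.Ioo r1 R ⊆ Set.Ioo 0 R := fun x hx =>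
        ⟨lt_of_le_of_lt hr1mem.1 hx.1, hx.2⟩
      have hIccsub : Set.Icc r1 R ⊆ Set.Icc 0 R := Set.Icc_subset_Icc hr1mem.1 le_rfl
      have hmonohw : MonotoneOn (fun r => -h r) (Set.Icc r1 R) := by
        apply monotoneOn_of_deriv_nonneg (convex_Icc r1 R) (hhc.mono hIccsub).neg
        · intro x hx
          rw [interior_Icc] at hx
          exact (hhd x (hsub hx)).neg.differentiableAt.differentiableWithinAt
        · intro x hx
          rw [interior_Icc] at hx
          rw [(hhd x (hsub hx)).neg.deriv]
          have h1 := hgle x (Set.Ioo_subset_Icc_self (hsub hx))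
          have h2 : (0:ℝ) < x := (hsub hx).1
          nlinarith
      have hhle : ∀ x ∈ Set.Icc r1 R, h x ≤ 0 := by
        intro x hx
        have := hmonohw ⟨le_rfl, hr1R.le⟩ hx hx.1
        simp only [hhr1, neg_zero] at this
        linarith
      have hwd : ∀ x ∈ Set.Ioo r1 R, HasDerivAt (fun s => 1 - g s) (-deriv g x) x :=
        fun x hx => ((hgd x (hsub hx)).hasDerivAt).const_sub 1
      have hg'le : ∀ x ∈ Set.Ioo r1 R, deriv g x ≤ 0 := by
        intro x hx
        have hhx := hhle x ⟨hx.1.le, hx.2.le⟩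
        have hx' := hsub hx
        have hhx' : h x = x * deriv g x := by simp [hhdef, hGd x hx']
        rw [hhx'] at hhx
        by_contra hpos
        push_neg at hpos
        nlinarith [hx'.1]
      have hmonow : MonotoneOn (fun s => 1 - g s) (Set.Icc r1 R) := by
        apply monotoneOn_of_deriv_nonneg (convex_Icc r1 R)
          (continuousOn_const.sub (hgc.mono hIccsub))
        · intro x hx
          rw [interior_Icc] at hx
          exact (hwd x hx).differentiableAt.differentiableWithinAt
        · intro x hx
          rw [interior_Icc] at hx
          rw [show deriv ((fun _ => (1:ℝ)) - g) x = -deriv g x from (hwd x hx).deriv]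
          linarith [hg'le x hx]
      have hstep : ∀ x ∈ Set.Ioo r1 R, -h x ≤ (1 - g x) / 2 * x ^ 2 := by
        intro x hx
        set φ : ℝ → ℝ := fun s => (1 - g x) / 2 * s ^ 2 + h s with hφdef
        have hwx : 0 ≤ 1 - g x := by
          linarith [hgle x (Set.Ioo_subset_Icc_self (hsub hx))]
        have hmonoφ : MonotoneOn φ (Set.Icc r1 x) := by
          apply monotoneOn_of_deriv_nonneg (convex_Icc r1 x)
          · exact (continuousOn_const.mul (continuousOn_pow 2)).add
              (hhc.mono (Set.Icc_subset_Icc hr1mem.1 hx.2.le))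
          · intro s hs
            rw [interior_Icc] at hs
            have hs' : s ∈ Set.Ioo 0 R := ⟨lt_of_le_of_lt hr1mem.1 hs.1, lt_trans hs.2 hx.2⟩
            exact (((hasDerivAt_pow 2 s).const_mul ((1 - g x)/2)).add
              (hhd s hs')).differentiableAt.differentiableWithinAt
          · intro s hs
            rw [interior_Icc] at hs
            have hs' : s ∈ Set.Ioo 0 R := ⟨lt_of_le_of_lt hr1mem.1 hs.1, lt_trans hs.2 hx.2⟩
            have hd : HasDerivAt φ ((1 - g x)/2 * (2 * s ^ 1) + s * (g s - 1)) s :=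
              ((hasDerivAt_pow 2 s).const_mul ((1 - g x)/2)).add (hhd s hs')
            rw [hd.deriv]
            have hws : 1 - g s ≤ 1 - g x :=
              hmonow ⟨hs.1.le, hs'.2.le⟩ ⟨hx.1.le, hx.2.le⟩ (le_trans hs.2.le le_rfl)
            have hs0 : (0:ℝ) < s := hs'.1
            nlinarith
        have := hmonoφ ⟨le_rfl, hx.1.le⟩ ⟨hx.1.le, le_rfl⟩ hx.1.le
        have hφr1 : φ r1 = (1 - g x)/2 * r1 ^ 2 := by simp [hφdef, hhr1]
        have hφx : φ x = (1 - g x)/2 * x ^ 2 + h x := rfl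
        rw [hφr1, hφx] at this
        nlinarith [sq_nonneg r1]
      set ψ : ℝ → ℝ := fun s => (1 - g s) * Real.exp (-(R/2) * s) with hψdef
      have hψanti : AntitoneOn ψ (Set.Icc r1 R) := by
        apply antitoneOn_of_deriv_nonpos (convex_Icc r1 R)
        · exact (continuousOn_const.sub (hgc.mono hIccsub)).mul
            (Real.continuous_exp.comp (continuous_const.mul continuous_id)).continuousOn
        · intro x hx
          rw [interior_Icc] at hx
          exact ((hwd x hx).mul
            (((hasDerivAt_id x).const_mul (-(R/2))).exp)).differentiableAt.differentiableWithinAt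
        · intro x hx
          rw [interior_Icc] at hx
          have hd : HasDerivAt ψ
              ((-deriv g x) * Real.exp (-(R/2) * x)
                + (1 - g x) * (Real.exp (-(R/2) * x) * (-(R/2) * 1))) x :=
            (hwd x hx).mul (((hasDerivAt_id x).const_mul (-(R/2))).exp)
          rw [hd.deriv]
          have hx' := hsub hx
          have hx0 : (0:ℝ) < x := hx'.1
          have hxR : x ≤ R := hx'.2.le
          have hwx : 0 ≤ 1 - g x := by
            linarith [hgle x (Set.Ioo_subset_Icc_self hx')]
          have hst := hstep x hx
          have hhx' : h x = x * deriv g x := by simp [hhdef, hGd x hx']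
          rw [hhx'] at hst
          have h1 : -deriv g x ≤ (1 - g x)/2 * x := by nlinarith
          have h2 : -deriv g x ≤ R/2 * (1 - g x) := by nlinarith
          have hE : 0 < Real.exp (-(R/2) * x) := Real.exp_pos _
          nlinarith [mul_le_mul_of_nonneg_right h2 hE.le]
      have hfin := hψanti ⟨le_rfl, hr1R.le⟩ ⟨hr1R.le, le_rfl⟩ hr1R.le
      have hψr1 : ψ r1 = 0 := by simp [hψdef, hgr1']
      have hψR : ψ R = Real.exp (-(R/2) * R) := by simp [hψdef, hgR]
      rw [hψr1, hψR] at hfin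
      exact absurd hfin (not_le.mpr (Real.exp_pos _))
  have key2 : ∀ r ∈ Set.Ico (0:ℝ) R, 0 < g r := by
    by_contra hcon
    push_neg at hcon
    obtain ⟨r0, hr0, hr0g⟩ := hcon
    obtain ⟨r2, hr2mem, hr2min⟩ := isCompact_Icc.exists_isMinOn (Set.nonempty_Icc.mpr hR.le) hgc
    set m := g r2 with hmdef
    have hm0 : m ≤ 0 := le_trans (hr2min ⟨hr0.1, hr0.2.le⟩) hr0g
    set T := Set.Icc 0 R ∩ g ⁻¹' {m} with hTdef
    have hTclosed : IsClosed T :=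
      hgc.preimage_isClosed_of_isClosed isClosed_Icc isClosed_singleton
    have hTcomp : IsCompact T := isCompact_Icc.of_isClosed_subset hTclosed Set.inter_subset_left
    have hTne : T.Nonempty := ⟨r2, hr2mem, rfl⟩
    set r1 := sInf T with hr1def
    have hr1T : r1 ∈ T := hTclosed.csInf_mem hTne hTcomp.bddBelow
    have hr1mem : r1 ∈ Set.Icc 0 R := hr1T.1
    have hgr1 : g r1 = m := hr1T.2
    have hmin1 : ∀ x ∈ Set.Icc 0 R, g r1 ≤ g x := fun x hx => hgr1.symm ▸ hr2min hx
    have hr1R : r1 < R := by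
      rcases lt_or_eq_of_le hr1mem.2 with hlt | heq
      · exact hlt
      · exfalso
        have hm' : m = 0 := by rw [← hgr1, heq, hgR]
        have hr0T : r0 ∈ T := ⟨⟨hr0.1, hr0.2.le⟩, by
          simp only [Set.mem_preimage, Set.mem_singleton_iff]
          exact le_antisymm (hm' ▸ hr0g) (hr2min ⟨hr0.1, hr0.2.le⟩)⟩
        have := csInf_le hTcomp.bddBelow hr0T
        rw [← hr1def] at this
        rw [heq] at this
        linarith [hr0.2]
    have hhr1 : h r1 = 0 := by
      rcases eq_or_lt_of_le hr1mem.1 with h0 | h0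
      · simp [hhdef, ← h0]
      · have hr1Ioo : r1 ∈ Set.Ioo (0:ℝ) R := ⟨h0, hr1R⟩
        have hloc : IsLocalMin g r1 :=
          IsMinOn.isLocalMin (fun x hx => hmin1 x hx) (Icc_mem_nhds h0 hr1R)
        simp [hhdef, hGd r1 hr1Ioo, hloc.deriv_eq_zero]
    have hsub : Set.Ioo r1 R ⊆ Set.Ioo 0 R := fun x hx =>
      ⟨lt_of_le_of_lt hr1mem.1 hx.1, hx.2⟩
    have hIccsub : Set.Icc r1 R ⊆ Set.Icc 0 R := Set.Icc_subset_Icc hr1mem.1 le_rfl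
    have hantih : StrictAntiOn h (Set.Icc r1 R) := by
      apply strictAntiOn_of_deriv_neg (convex_Icc r1 R) (hhc.mono hIccsub)
      intro x hx
      rw [interior_Icc] at hx
      rw [(hhd x (hsub hx)).deriv]
      have hlt1 := key1 x ⟨le_trans hr1mem.1 hx.1.le, hx.2⟩
      have hx0 : (0:ℝ) < x := (hsub hx).1
      nlinarith
    have hg'neg : ∀ x ∈ Set.Ioo r1 R, deriv g x < 0 := by
      intro x hx
      have hhx : h x < 0 := by
        have := hantih ⟨le_rfl, hr1R.le⟩ ⟨hx.1.le, hx.2.le⟩ hx.1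
        rwa [hhr1] at this
      have hx' := hsub hx
      have hhx' : h x = x * deriv g x := by simp [hhdef, hGd x hx']
      rw [hhx'] at hhx
      by_contra hpos
      push_neg at hpos
      nlinarith [hx'.1]
    have hantig : StrictAntiOn g (Set.Icc r1 R) := by
      apply strictAntiOn_of_deriv_neg (convex_Icc r1 R) (hgc.mono hIccsub)
      intro x hx
      rw [interior_Icc] at hx
      exact hg'neg x hx
    have := hantig ⟨le_rfl, hr1R.le⟩ ⟨hr1R.le, le_rfl⟩ hr1R
    rw [hgR, hgr1] at this
    linarith
  exact fun r hr => ⟨key2 r hr, key1 r hr⟩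
end

section
/- Let S : ℝ² → ℝ be twice continuously differentiable, let V ∈ ℝ² and m₀ ∈ ℝ, and define m : ℝ² → ℝ by m(x) = m₀·exp(S(x) − ⟨V, x⟩). Then ∇m(x) = m(x)·(∇S(x) − V) for every x ∈ ℝ², and consequently −Δm(x) + div((∇S − V)·m)(x) = 0 for every x ∈ ℝ². -/
/-- Partial derivative of `f : ℝ × ℝ → ℝ` in the first coordinate direction. -/
noncomputable def pd1 (f : ℝ × ℝ → ℝ) : ℝ × ℝ → ℝ := fun p => fderiv ℝ f p (1, 0)

/-- Partial derivative of `f : ℝ × ℝ → ℝ` in the second coordinate direction. -/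
noncomputable def pd2 (f : ℝ × ℝ → ℝ) : ℝ × ℝ → ℝ := fun p => fderiv ℝ f p (0, 1)

theorem myosin_elimination
    (S : ℝ × ℝ → ℝ) (hS : ContDiff ℝ 2 S) (V : ℝ × ℝ) (m₀ : ℝ)
    (m : ℝ × ℝ → ℝ)
    (hm : ∀ p : ℝ × ℝ, m p = m₀ * Real.exp (S p - (V.1 * p.1 + V.2 * p.2))) :
    (∀ p : ℝ × ℝ,
      pd1 m p = m p * (pd1 S p - V.1) ∧ pd2 m p = m p * (pd2 S p - V.2)) ∧
    (∀ p : ℝ × ℝ,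
      -(pd1 (pd1 m) p + pd2 (pd2 m) p)
        + (pd1 (fun q => (pd1 S q - V.1) * m q) p
          + pd2 (fun q => (pd2 S q - V.2) * m q) p) = 0) := by
  have hmfun : m = fun p => m₀ * Real.exp (S p - (V.1 * p.1 + V.2 * p.2)) := funext hm
  subst hmfun
  have hSd : ∀ p : ℝ × ℝ, HasFDerivAt S (fderiv ℝ S p) p := fun p =>
    ((hS.differentiable (by norm_num)) p).hasFDerivAt
  have hm' : ∀ p : ℝ × ℝ,
      HasFDerivAt (fun p : ℝ × ℝ => m₀ * Real.exp (S p - (V.1 * p.1 + V.2 * p.2)))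
        ((m₀ * Real.exp (S p - (V.1 * p.1 + V.2 * p.2))) •
          (fderiv ℝ S p - (V.1 • ContinuousLinearMap.fst ℝ ℝ ℝ +
            V.2 • ContinuousLinearMap.snd ℝ ℝ ℝ))) p := by
    intro p
    have hf : HasFDerivAt (fun p : ℝ × ℝ => V.1 * p.1 + V.2 * p.2)
        (V.1 • ContinuousLinearMap.fst ℝ ℝ ℝ + V.2 • ContinuousLinearMap.snd ℝ ℝ ℝ) p :=
      ((hasFDerivAt_fst (𝕜 := ℝ) (p := p)).const_mul V.1).add
        ((hasFDerivAt_snd (𝕜 := ℝ) (p := p)).const_mul V.2)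
    have hg := (hSd p).sub hf
    have hexp := hg.exp
    have := hexp.const_mul m₀
    rw [smul_smul] at this
    exact this
  have key : ∀ p : ℝ × ℝ,
      pd1 (fun p : ℝ × ℝ => m₀ * Real.exp (S p - (V.1 * p.1 + V.2 * p.2))) p
        = (m₀ * Real.exp (S p - (V.1 * p.1 + V.2 * p.2))) * (pd1 S p - V.1) ∧
      pd2 (fun p : ℝ × ℝ => m₀ * Real.exp (S p - (V.1 * p.1 + V.2 * p.2))) p
        = (m₀ * Real.exp (S p - (V.1 * p.1 + V.2 * p.2))) * (pd2 S p - V.2) := by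
    intro p
    constructor <;>
    · simp only [pd1, pd2, (hm' p).fderiv]
      simp [pd1, pd2]
  refine ⟨key, ?_⟩
  intro p
  have e1 : pd1 (fun p : ℝ × ℝ => m₀ * Real.exp (S p - (V.1 * p.1 + V.2 * p.2)))
      = fun q => (pd1 S q - V.1) * (m₀ * Real.exp (S q - (V.1 * q.1 + V.2 * q.2))) := by
    funext q; rw [(key q).1, mul_comm]
  have e2 : pd2 (fun p : ℝ × ℝ => m₀ * Real.exp (S p - (V.1 * p.1 + V.2 * p.2)))
      = fun q => (pd2 S q - V.2) * (m₀ * Real.exp (S q - (V.1 * q.1 + V.2 * q.2))) := by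
    funext q; rw [(key q).2, mul_comm]
  rw [e1, e2]
  ring
end

section
/- Let R > 0 and Λ > 0, and let Φ be a radial steady state with parameters (R, Λ). Suppose μ ∈ ℝ and U : ℝ → ℝ is continuously differentiable on [0, R], twice continuously differentiable on (0, R), satisfies −U''(r) − U'(r)/r = μ·U(r) for every r ∈ (0, R), with U'(0) = 0, U(R) = 0, and U(r) > 0 for every r ∈ [0, R). Then Λ ≤ 1 + μ. -/
/-- Pointwise inequality: if `0 < c < Λ` then `c * x < Λ * exp x` for all `x`. -/
lemma key_ineq (c Λ x : ℝ) (hc : 0 < c) (h : c < Λ) : c * x < Λ * Real.exp x := by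
  rcases le_or_gt x 0 with hx | hx
  · have h1 := Real.exp_pos x
    nlinarith
  · have h1 : x < Real.exp x := by
      have := Real.add_one_le_exp x; linarith
    nlinarith [Real.exp_pos x]

/-- On an open interval, a `C²` function has honest first and second derivatives. -/
lemma derivs_on_Ioo {f : ℝ → ℝ} {a b : ℝ} (hf : ContDiffOn ℝ 2 f (Set.Ioo a b))
    {r : ℝ} (hr : r ∈ Set.Ioo a b) :
    HasDerivAt f (deriv f r) r ∧ HasDerivAt (deriv f) (deriv (deriv f) r) r := by
  have hopen : IsOpen (Set.Ioo a b) := isOpen_Ioo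
  have h1 : DifferentiableOn ℝ f (Set.Ioo a b) := hf.differentiableOn two_ne_zero
  have hd1 : DifferentiableAt ℝ f r :=
    (h1 r hr).differentiableAt (hopen.mem_nhds hr)
  have hderiv : ContDiffOn ℝ 1 (deriv f) (Set.Ioo a b) := by
    have := hf.deriv_of_isOpen (m := 1) hopen (by norm_num)
    simpa using this
  have h2 : DifferentiableOn ℝ (deriv f) (Set.Ioo a b) := hderiv.differentiableOn one_ne_zero
  have hd2 : DifferentiableAt ℝ (deriv f) r :=
    (h2 r hr).differentiableAt (hopen.mem_nhds hr)
  exact ⟨hd1.hasDerivAt, hd2.hasDerivAt⟩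

theorem lambda_upper_bound
    (R Λ : ℝ) (hR : 0 < R) (hΛ : 0 < Λ) (Φ : ℝ → ℝ)
    (hΦ : IsRadialSteadyState R Λ Φ)
    (μ : ℝ) (U : ℝ → ℝ)
    (hU1 : ContDiffOn ℝ 1 U (Set.Icc 0 R))
    (hU2 : ContDiffOn ℝ 2 U (Set.Ioo 0 R))
    (hUeq : ∀ r ∈ Set.Ioo (0:ℝ) R,
      -(deriv (deriv U) r) - deriv U r / r = μ * U r)
    (hU0 : deriv U 0 = 0) (hUR : U R = 0)
    (hUpos : ∀ r ∈ Set.Ico (0:ℝ) R, 0 < U r) :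
    Λ ≤ 1 + μ := by
  obtain ⟨hΦ2, hΦeq, hΦ'0, hΦR⟩ := hΦ
  have hIccInt : interior (Set.Icc (0:ℝ) R) = Set.Ioo 0 R := interior_Icc
  have hIooIcc : Set.Ioo (0:ℝ) R ⊆ Set.Icc 0 R := Set.Ioo_subset_Icc_self
  have hIccNhds : ∀ r ∈ Set.Ioo (0:ℝ) R, Set.Icc (0:ℝ) R ∈ nhds r := fun r hr =>
    Filter.mem_of_superset (isOpen_Ioo.mem_nhds hr) hIooIcc
  have hUdW : ∀ r ∈ Set.Ioo (0:ℝ) R, derivWithin U (Set.Icc 0 R) r = deriv U r :=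
    fun r hr => derivWithin_of_mem_nhds (hIccNhds r hr)
  -- Step 1: μ > 0, via monotonicity of V r = r * U'(r).
  have hμ : 0 < μ := by
    by_contra hμ
    push_neg at hμ
    set V : ℝ → ℝ := fun r => r * derivWithin U (Set.Icc 0 R) r with hV
    have hVcont : ContinuousOn V (Set.Icc 0 R) :=
      continuousOn_id.mul (hU1.continuousOn_derivWithin (uniqueDiffOn_Icc hR) le_rfl)
    have hVderiv : ∀ r ∈ Set.Ioo (0:ℝ) R, HasDerivAt V (-μ * r * U r) r := by
      intro r hr
      obtain ⟨hd1, hd2⟩ := derivs_on_Ioo hU2 hr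
      have hr0 : (0:ℝ) < r := hr.1
      have hDD : HasDerivAt (fun x => x * deriv U x)
          (1 * deriv U r + r * deriv (deriv U) r) r := (hasDerivAt_id r).mul hd2
      have heq : deriv U r + r * deriv (deriv U) r = -μ * r * U r := by
        have h := hUeq r hr
        have : deriv (deriv U) r = -(deriv U r / r) - μ * U r := by linarith
        rw [this]
        field_simp
        ring
      have hDD' : HasDerivAt (fun x => x * deriv U x) (-μ * r * U r) r := by
        rw [one_mul] at hDD; rwa [heq] at hDD
      apply hDD'.congr_of_eventuallyEq
      filter_upwards [isOpen_Ioo.mem_nhds hr] with x hx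
      rw [hV]
      simp only [derivWithin_of_mem_nhds (hIccNhds x hx)]
    have hVmono : MonotoneOn V (Set.Icc 0 R) := by
      apply monotoneOn_of_deriv_nonneg (convex_Icc 0 R) hVcont
      · rw [hIccInt]
        intro x hx
        exact ((hVderiv x hx).differentiableAt).differentiableWithinAt
      · rw [hIccInt]
        intro x hx
        rw [(hVderiv x hx).deriv]
        have hu := (hUpos x ⟨le_of_lt hx.1, hx.2⟩)
        have hm : (0:ℝ) ≤ -μ := by linarith
        exact mul_nonneg (mul_nonneg hm hx.1.le) hu.le
    have hU'nonneg : ∀ r ∈ Set.Ioo (0:ℝ) R, 0 ≤ deriv U r := by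
      intro r hr
      have h0 : V 0 = 0 := by simp [hV]
      have hmono := hVmono (Set.left_mem_Icc.2 hR.le) (hIooIcc hr) hr.1.le
      rw [h0] at hmono
      have hVr : V r = r * deriv U r := by rw [hV]; simp [hUdW r hr]
      rw [hVr] at hmono
      exact nonneg_of_mul_nonneg_right hmono hr.1
    -- U is monotone on [0,R], so U R ≥ U 0 > 0, contradicting U R = 0.
    have hUmono : MonotoneOn U (Set.Icc 0 R) := by
      apply monotoneOn_of_deriv_nonneg (convex_Icc 0 R) hU1.continuousOn
      · rw [hIccInt]
        intro x hx
        exact ((derivs_on_Ioo hU2 hx).1.differentiableAt).differentiableWithinAt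
      · rw [hIccInt]
        exact hU'nonneg
    have h1 := hUmono (Set.left_mem_Icc.2 hR.le) (Set.right_mem_Icc.2 hR.le) hR.le
    have h2 := hUpos 0 ⟨le_rfl, hR⟩
    rw [hUR] at h1
    linarith
  -- Step 2: Wronskian argument. Suppose Λ > 1 + μ.
  by_contra hcon
  push_neg at hcon
  have hc : 0 < 1 + μ := by linarith
  have hΦdW : ∀ r ∈ Set.Ioo (0:ℝ) R, derivWithin Φ (Set.Icc 0 R) r = deriv Φ r :=
    fun r hr => derivWithin_of_mem_nhds (hIccNhds r hr)
  set W : ℝ → ℝ := fun r =>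
    r * (derivWithin Φ (Set.Icc 0 R) r * U r - Φ r * derivWithin U (Set.Icc 0 R) r) with hW
  have hWcont : ContinuousOn W (Set.Icc 0 R) := by
    apply continuousOn_id.mul
    exact ((hΦ2.continuousOn_derivWithin (uniqueDiffOn_Icc hR) one_le_two).mul
      hU1.continuousOn).sub (hΦ2.continuousOn.mul
      (hU1.continuousOn_derivWithin (uniqueDiffOn_Icc hR) le_rfl))
  have hWderiv : ∀ r ∈ Set.Ioo (0:ℝ) R,
      HasDerivAt W (r * U r * ((1 + μ) * Φ r - Λ * Real.exp (Φ r))) r := by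
    intro r hr
    have hr0 : (0:ℝ) < r := hr.1
    obtain ⟨hp1, hp2⟩ := derivs_on_Ioo (hΦ2.mono hIooIcc) hr
    obtain ⟨hq1, hq2⟩ := derivs_on_Ioo hU2 hr
    have hg : HasDerivAt (fun x => deriv Φ x * U x - Φ x * deriv U x)
        (deriv (deriv Φ) r * U r + deriv Φ r * deriv U r -
          (deriv Φ r * deriv U r + Φ r * deriv (deriv U) r)) r := (hp2.mul hq1).sub (hp1.mul hq2)
    have hWt : HasDerivAt (fun x => x * (deriv Φ x * U x - Φ x * deriv U x))
        (1 * (deriv Φ r * U r - Φ r * deriv U r) +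
          r * (deriv (deriv Φ) r * U r + deriv Φ r * deriv U r -
            (deriv Φ r * deriv U r + Φ r * deriv (deriv U) r))) r := (hasDerivAt_id r).mul hg
    have e1 : deriv (deriv Φ) r = Φ r - Λ * Real.exp (Φ r) - deriv Φ r / r := by
      have := hΦeq r hr; linarith
    have e2 : deriv (deriv U) r = -(deriv U r / r) - μ * U r := by
      have := hUeq r hr; linarith
    have hval : 1 * (deriv Φ r * U r - Φ r * deriv U r) +
          r * (deriv (deriv Φ) r * U r + deriv Φ r * deriv U r -
            (deriv Φ r * deriv U r + Φ r * deriv (deriv U) r))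
        = r * U r * ((1 + μ) * Φ r - Λ * Real.exp (Φ r)) := by
      rw [e1, e2]
      field_simp
      ring
    rw [hval] at hWt
    apply hWt.congr_of_eventuallyEq
    filter_upwards [isOpen_Ioo.mem_nhds hr] with x hx
    rw [hW]
    simp only [hΦdW x hx, hUdW x hx]
  have hWanti : StrictAntiOn W (Set.Icc 0 R) := by
    apply strictAntiOn_of_deriv_neg (convex_Icc 0 R) hWcont
    rw [hIccInt]
    intro x hx
    rw [(hWderiv x hx).deriv]
    have hu := hUpos x ⟨hx.1.le, hx.2⟩
    have hk := key_ineq (1 + μ) Λ (Φ x) hc hcon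
    exact mul_neg_of_pos_of_neg (mul_pos hx.1 hu) (by linarith)
  have h1 := hWanti (Set.left_mem_Icc.2 hR.le) (Set.right_mem_Icc.2 hR.le) hR
  have hW0 : W 0 = 0 := by simp [hW]
  have hWR : W R = 0 := by simp [hW, hΦR, hUR]
  rw [hW0, hWR] at h1
  exact lt_irrefl 0 h1
end
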